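/- For the Gandy-style forcing 𝒫: for every condition p ∈ 𝒫 there exists a generic sequence ⟨G_n⟩_{n∈ℕ} meeting p, where generic means that for every dense subset of 𝒫 that is arithmetical in the complete Π¹₁ set, the sequence meets some condition in it. -/

import Mathlib

namespace SOA

/-! Syntax of second-order arithmetic -/

inductive Term : Type where
  | var : ℕ → Term
  | zero : Term
  | succ : Term → Term
  | add : Term → Term → Term
  | mul : Term → Term → Term

inductive Fml : Type where
  | eq : Term → Term → Fml
  | lt : Term → Term → Fml
  | mem : Term → ℕ → Fml
  | not : Fml → Fml
  | and : Fml → Fml → Fml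
  | nall : ℕ → Fml → Fml
  | nex : ℕ → Fml → Fml
  | ballLt : ℕ → Term → Fml → Fml
  | bexLt : ℕ → Term → Fml → Fml
  | sall : ℕ → Fml → Fml
  | sex : ℕ → Fml → Fml

/-! Henkin (two-sorted) models of the language of second-order arithmetic -/

structure L2Model : Type 1 where
  Num : Type
  zero : Num
  succ : Num → Num
  add : Num → Num → Num
  mul : Num → Num → Num
  Sets : Set (Set Num)

def L2Model.lt (M : L2Model) (a b : M.Num) : Prop := ∃ k, M.add a (M.succ k) = b

def Term.val (M : L2Model) (v : ℕ → M.Num) : Term → M.Num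
  | .var n => v n
  | .zero => M.zero
  | .succ t => M.succ (t.val M v)
  | .add t u => M.add (t.val M v) (u.val M v)
  | .mul t u => M.mul (t.val M v) (u.val M v)

/-- Satisfaction: number variables range over `M.Num`, set variables over `M.Sets`. -/
def Sat (M : L2Model) : (ℕ → M.Num) → (ℕ → Set M.Num) → Fml → Prop
  | v, _, .eq t u => t.val M v = u.val M v
  | v, _, .lt t u => M.lt (t.val M v) (u.val M v)
  | v, A, .mem t i => t.val M v ∈ A i
  | v, A, .not φ => ¬ Sat M v A φ
  | v, A, .and φ ψ => Sat M v A φ ∧ Sat M v A ψ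
  | v, A, .nall x φ => ∀ a : M.Num, Sat M (Function.update v x a) A φ
  | v, A, .nex x φ => ∃ a : M.Num, Sat M (Function.update v x a) A φ
  | v, A, .ballLt x t φ => ∀ a : M.Num, M.lt a (t.val M v) → Sat M (Function.update v x a) A φ
  | v, A, .bexLt x t φ => ∃ a : M.Num, M.lt a (t.val M v) ∧ Sat M (Function.update v x a) A φ
  | v, A, .sall X φ => ∀ S ∈ M.Sets, Sat M v (Function.update A X S) φ
  | v, A, .sex X φ => ∃ S ∈ M.Sets, Sat M v (Function.update A X S) φ

/-! Formula classes -/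

def Fml.arithmetical : Fml → Prop
  | .eq _ _ => True
  | .lt _ _ => True
  | .mem _ _ => True
  | .not φ => φ.arithmetical
  | .and φ ψ => φ.arithmetical ∧ ψ.arithmetical
  | .nall _ φ => φ.arithmetical
  | .nex _ φ => φ.arithmetical
  | .ballLt _ _ φ => φ.arithmetical
  | .bexLt _ _ φ => φ.arithmetical
  | .sall _ _ => False
  | .sex _ _ => False

def Fml.delta0 : Fml → Prop
  | .eq _ _ => True
  | .lt _ _ => True
  | .mem _ _ => True
  | .not φ => φ.delta0
  | .and φ ψ => φ.delta0 ∧ ψ.delta0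
  | .ballLt _ _ φ => φ.delta0
  | .bexLt _ _ φ => φ.delta0
  | .nall _ _ => False
  | .nex _ _ => False
  | .sall _ _ => False
  | .sex _ _ => False

def Fml.sigma01 (φ : Fml) : Prop := φ.delta0 ∨ ∃ x ψ, Fml.delta0 ψ ∧ φ = .nex x ψ
def Fml.sigma11 (φ : Fml) : Prop := φ.arithmetical ∨ ∃ X ψ, Fml.arithmetical ψ ∧ φ = .sex X ψ
def Fml.pi11 (φ : Fml) : Prop := φ.arithmetical ∨ ∃ X ψ, Fml.arithmetical ψ ∧ φ = .sall X ψ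
def Fml.sigma12 (φ : Fml) : Prop := φ.sigma11 ∨ ∃ X ψ, Fml.pi11 ψ ∧ φ = .sex X ψ
def Fml.pi12 (φ : Fml) : Prop := φ.pi11 ∨ ∃ X ψ, Fml.sigma11 ψ ∧ φ = .sall X ψ

/-! ω-models (standard first-order part) -/

def stdModel (𝒮 : Set (Set ℕ)) : L2Model := ⟨ℕ, 0, Nat.succ, (· + ·), (· * ·), 𝒮⟩

/-- Truth of `φ` in the full standard model, with `X` as value of every free set
variable and `0` as value of every free number variable (used for formulas whose only
free set variable is the distinguished one). -/
def holds1 (φ : Fml) (X : Set ℕ) : Prop :=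
  Sat (stdModel Set.univ) (fun _ => (0:ℕ)) (fun _ => X) φ

/-- `X` is hyperarithmetical in `Y`: by Kleene's theorem, `X` is Δ¹₁ in `Y`
(definable both by a Σ¹₁ and by a Π¹₁ formula with parameter `Y`, number variable `0`). -/
def HypIn (X Y : Set ℕ) : Prop :=
  ∃ σ π : Fml, σ.sigma11 ∧ π.pi11 ∧
    (∀ n : ℕ, n ∈ X ↔ Sat (stdModel Set.univ) (fun _ => n) (fun _ => Y) σ) ∧
    (∀ n : ℕ, n ∈ X ↔ Sat (stdModel Set.univ) (fun _ => n) (fun _ => Y) π)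

/-- `X` is hyperarithmetical. -/
def Hyp (X : Set ℕ) : Prop := HypIn X ∅

/-- ω-model: nonempty and closed under arithmetical definability with parameters. -/
def IsOmegaModel (𝒮 : Set (Set ℕ)) : Prop :=
  𝒮.Nonempty ∧
  ∀ φ : Fml, φ.arithmetical → ∀ (v : ℕ → ℕ) (A : ℕ → Set ℕ), (∀ i, A i ∈ 𝒮) →
    ∀ x : ℕ, {n : ℕ | Sat (stdModel Set.univ) (Function.update v x n) A φ} ∈ 𝒮

/-- β-model: an ω-model absolute for Σ¹₁ formulas with parameters from the model. -/
def IsBetaModel (𝒮 : Set (Set ℕ)) : Prop :=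
  IsOmegaModel 𝒮 ∧
  ∀ φ : Fml, φ.sigma11 → ∀ (v : ℕ → ℕ) (A : ℕ → Set ℕ), (∀ i, A i ∈ 𝒮) →
    (Sat (stdModel 𝒮) v A φ ↔ Sat (stdModel Set.univ) v A φ)

/-- `X` is definable over the ω-model `𝒮` without parameters: some formula (all of whose
free set variables are given the value `Z`) is satisfied in `𝒮` exactly by `Z = X`. -/
def DefinableIn (𝒮 : Set (Set ℕ)) (X : Set ℕ) : Prop :=
  ∃ φ : Fml, ∀ Z ∈ 𝒮, (Sat (stdModel 𝒮) (fun _ => (0:ℕ)) (fun _ => Z) φ ↔ Z = X)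

/-- `X` is definable over `𝒮` from the parameter `Y` (set variable 0 is the definiendum). -/
def DefinableInFrom (𝒮 : Set (Set ℕ)) (X Y : Set ℕ) : Prop :=
  ∃ φ : Fml, ∀ Z ∈ 𝒮,
    (Sat (stdModel 𝒮) (fun _ => (0:ℕ)) (fun i => if i = 0 then Z else Y) φ ↔ Z = X)


/-! Gandy-style forcing over the standard model -/

/-- Recursive join `X_0 ⊕ ⋯ ⊕ X_{k-1}` of a finite list of reals. -/
def listJoin (L : List (Set ℕ)) : Set ℕ :=
  {n : ℕ | (Nat.unpair n).1 < L.length ∧ (Nat.unpair n).2 ∈ L.getD (Nat.unpair n).1 ∅}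

/-- `𝒞` is a Σ¹₁ set (class) of reals. -/
def Sigma11Class (𝒞 : Set (Set ℕ)) : Prop :=
  ∃ φ : Fml, φ.sigma11 ∧ ∀ X : Set ℕ, X ∈ 𝒞 ↔ holds1 φ X

/-- `S` is an enumeration of the Σ¹₁ sets of reals. -/
def IsS11Enum (S : ℕ → Set (Set ℕ)) : Prop :=
  (∀ e, Sigma11Class (S e)) ∧ ∀ 𝒞, Sigma11Class 𝒞 → ∃ e, S e = 𝒞

/-- Forcing conditions: finite subsets of ℕ × ℕ^{<ω}. -/
abbrev Cond := Finset (ℕ × List ℕ)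

/-- `⟨X_n⟩` meets `p` iff `X_{n₁} ⊕ ⋯ ⊕ X_{n_k} ∈ S_e` for every `(e,⟨n₁,…,n_k⟩) ∈ p`. -/
def Meets (S : ℕ → Set (Set ℕ)) (Xs : ℕ → Set ℕ) (p : Cond) : Prop :=
  ∀ q ∈ p, listJoin (q.2.map Xs) ∈ S q.1

/-- The poset 𝒫 of meetable conditions. -/
def Conds (S : ℕ → Set (Set ℕ)) : Set Cond := {p | ∃ Xs : ℕ → Set ℕ, Meets S Xs p}

/-- Action of a permutation of ℕ on conditions. -/
def permCond (π : Equiv.Perm ℕ) (p : Cond) : Cond := p.image fun q => (q.1, q.2.map π)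

/-- Support of a condition. -/
def supp (p : Cond) : Finset ℕ := p.biUnion fun q => q.2.toFinset

/-- The ω-model HYP(Y) of all reals hyperarithmetical in `Y`. -/
def HYPin (Y : Set ℕ) : Set (Set ℕ) := {X | HypIn X Y}

/-- The set of numerical codes of the members of a set of conditions. -/
def codeSet (D : Set Cond) : Set ℕ := {n | ∃ p ∈ D, Encodable.encode p = n}

/-- `D ⊆ ℕ` is definable over the ω-model `𝒮` from the parameter `Y`. -/
def DefOverFrom (𝒮 : Set (Set ℕ)) (Y : Set ℕ) (D : Set ℕ) : Prop :=
  ∃ φ : Fml, ∀ n : ℕ, n ∈ D ↔ Sat (stdModel 𝒮) (fun _ => n) (fun _ => Y) φ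

/-- `D` is a dense subset of the poset `P` (order = reverse inclusion). -/
def DenseIn (P D : Set Cond) : Prop := D ⊆ P ∧ ∀ p ∈ P, ∃ q ∈ D, p ⊆ q

/-- `⟨G_n⟩` is generic: it meets every dense subset of 𝒫 definable over HYP. -/
def Generic (S : ℕ → Set (Set ℕ)) (G : ℕ → Set ℕ) : Prop :=
  ∀ D : Set Cond, DenseIn (Conds S) D → DefOverFrom (HYPin ∅) ∅ (codeSet D) →
    ∃ p ∈ D, Meets S G p

/-- The relativized poset 𝒫^Y. -/
def CondsOver (S : ℕ → Set (Set ℕ)) (Y : Set ℕ) : Set Cond :=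
  {p | ∃ Xs : ℕ → Set ℕ, Xs 0 = Y ∧ Meets S Xs p}

/-- `⟨G_n⟩` is generic over `Y`: it meets every dense subset of 𝒫^Y definable
from `Y` over HYP(Y). -/
def GenericOver (S : ℕ → Set (Set ℕ)) (Y : Set ℕ) (G : ℕ → Set ℕ) : Prop :=
  ∀ D : Set Cond, DenseIn (CondsOver S Y) D → DefOverFrom (HYPin Y) Y (codeSet D) →
    ∃ p ∈ D, Meets S G p


/-! Axioms of subsystems of second-order arithmetic, rendered semantically
    on Henkin models (so, by completeness, `Provable` below is provability). -/

/-- Basic axioms of ordered semiring arithmetic. -/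
def L2Model.base (M : L2Model) : Prop :=
  (∀ a, M.succ a ≠ M.zero) ∧ (∀ a b, M.succ a = M.succ b → a = b) ∧
  (∀ a, M.add a M.zero = a) ∧ (∀ a b, M.add a (M.succ b) = M.succ (M.add a b)) ∧
  (∀ a, M.mul a M.zero = M.zero) ∧ (∀ a b, M.mul a (M.succ b) = M.add (M.mul a b) a) ∧
  (∀ a b, M.add a b = M.add b a) ∧ (∀ a b c, M.add (M.add a b) c = M.add a (M.add b c)) ∧
  (∀ a b, M.mul a b = M.mul b a) ∧ (∀ a b c, M.mul (M.mul a b) c = M.mul a (M.mul b c)) ∧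
  (∀ a b c, M.mul a (M.add b c) = M.add (M.mul a b) (M.mul a c)) ∧
  (∀ a b c, M.add a b = M.add a c → b = c) ∧
  (∀ a b, M.lt a b ∨ a = b ∨ M.lt b a) ∧ (∀ a, ¬ M.lt a a)

/-- Induction axiom for sets of the model. -/
def L2Model.indAx (M : L2Model) : Prop :=
  ∀ X ∈ M.Sets, M.zero ∈ X → (∀ a, a ∈ X → M.succ a ∈ X) → ∀ a, a ∈ X

/-- Arithmetical comprehension (with number and set parameters). -/
def ACAax (M : L2Model) : Prop :=
  ∀ φ : Fml, φ.arithmetical → ∀ (v : ℕ → M.Num) (A : ℕ → Set M.Num),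
    (∀ i, A i ∈ M.Sets) → ∀ x : ℕ,
      {a : M.Num | Sat M (Function.update v x a) A φ} ∈ M.Sets

/-- Δ⁰₁ comprehension. -/
def Delta01CAax (M : L2Model) : Prop :=
  ∀ σ π : Fml, σ.sigma01 → π.sigma01 → ∀ (v : ℕ → M.Num) (A : ℕ → Set M.Num),
    (∀ i, A i ∈ M.Sets) → ∀ x : ℕ,
    (∀ a : M.Num, Sat M (Function.update v x a) A σ ↔ ¬ Sat M (Function.update v x a) A π) →
    {a : M.Num | Sat M (Function.update v x a) A σ} ∈ M.Sets

/-- Σ⁰₁ induction. -/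
def Sigma01IndAx (M : L2Model) : Prop :=
  ∀ σ : Fml, σ.sigma01 → ∀ (v : ℕ → M.Num) (A : ℕ → Set M.Num),
    (∀ i, A i ∈ M.Sets) → ∀ x : ℕ,
    Sat M (Function.update v x M.zero) A σ →
    (∀ a, Sat M (Function.update v x a) A σ → Sat M (Function.update v x (M.succ a)) A σ) →
    ∀ a, Sat M (Function.update v x a) A σ

/-- `c` is the Cantor pair code `⟨a,b⟩`, i.e. `2c = (a+b)(a+b+1) + 2a`. -/
def pairRel (M : L2Model) (a b c : M.Num) : Prop :=
  M.add c c = M.add (M.mul (M.add a b) (M.succ (M.add a b))) (M.add a a)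

/-- The pair `⟨a,b⟩` belongs to `X`. -/
def inPair (M : L2Model) (a b : M.Num) (X : Set M.Num) : Prop :=
  ∃ c, pairRel M a b c ∧ c ∈ X

/-- Field of a binary relation coded as a set of pairs. -/
def fieldOf (M : L2Model) (W : Set M.Num) : Set M.Num :=
  {a | ∃ b, inPair M a b W ∨ inPair M b a W}

/-- `W` codes a (reflexive) linear ordering of its field. -/
def LinOrd (M : L2Model) (W : Set M.Num) : Prop :=
  (∀ c ∈ W, ∃ a b, pairRel M a b c) ∧
  (∀ a ∈ fieldOf M W, inPair M a a W) ∧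
  (∀ a b, inPair M a b W → inPair M b a W → a = b) ∧
  (∀ a b c, inPair M a b W → inPair M b c W → inPair M a c W) ∧
  (∀ a b, a ∈ fieldOf M W → b ∈ fieldOf M W → inPair M a b W ∨ inPair M b a W)

/-- `W` codes a well ordering (in the sense of the model): every nonempty set
in the model meeting the field has a `W`-least member. -/
def WOrd (M : L2Model) (W : Set M.Num) : Prop :=
  LinOrd M W ∧
  ∀ Z ∈ M.Sets, (∃ a, a ∈ Z ∧ a ∈ fieldOf M W) →
    ∃ a, a ∈ Z ∧ a ∈ fieldOf M W ∧ ∀ b, b ∈ Z → b ∈ fieldOf M W → inPair M a b W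

/-- Arithmetical transfinite recursion: for every arithmetical `θ` (with distinguished
number variable `x` and set variable `Xv`, and arbitrary parameters) and every well
ordering `W` in the model, the iteration hierarchy `Y` exists in the model. -/
def ATRax (M : L2Model) : Prop :=
  ∀ θ : Fml, θ.arithmetical → ∀ (x Xv : ℕ) (v : ℕ → M.Num) (A : ℕ → Set M.Num),
    (∀ i, A i ∈ M.Sets) → ∀ W ∈ M.Sets, WOrd M W →
    ∃ Y ∈ M.Sets, ∀ n j : M.Num,
      inPair M n j Y ↔ (j ∈ fieldOf M W ∧
        Sat M (Function.update v x n)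
          (Function.update A Xv
            {c | c ∈ Y ∧ ∃ m i, pairRel M m i c ∧ inPair M i j W ∧ i ≠ j}) θ)

/-- Transfinite induction scheme, for arbitrary L₂ formulas. -/
def TIax (M : L2Model) : Prop :=
  ∀ φ : Fml, ∀ (x : ℕ) (v : ℕ → M.Num) (A : ℕ → Set M.Num),
    (∀ i, A i ∈ M.Sets) → ∀ W ∈ M.Sets, WOrd M W →
    (∀ j ∈ fieldOf M W,
        (∀ i, inPair M i j W → i ≠ j → Sat M (Function.update v x i) A φ) →
        Sat M (Function.update v x j) A φ) →
    ∀ j ∈ fieldOf M W, Sat M (Function.update v x j) A φ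

/-- Henkin model of ATR₀. -/
def ModelOfATR (M : L2Model) : Prop := M.base ∧ M.indAx ∧ ACAax M ∧ ATRax M

/-- Henkin model of Π¹_∞-TI₀. -/
def ModelOfTI (M : L2Model) : Prop := M.base ∧ M.indAx ∧ ACAax M ∧ TIax M

/-- `X` is definable from `Y` over the Henkin model `M` (set variable 0 is the
definiendum, all other set variables denote `Y`). -/
def DefFromInModel (M : L2Model) (X Y : Set M.Num) : Prop :=
  ∃ φ : Fml, ∀ Z ∈ M.Sets,
    (Sat M (fun _ => M.zero) (fun i => if i = 0 then Z else Y) φ ↔ Z = X)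

/-- `X ≤_HYP Y` in the sense of the Henkin model `M`: `X` is Δ¹₁ in `Y` over `M`. -/
def HypInSem (M : L2Model) (X Y : Set M.Num) : Prop :=
  ∃ σ π : Fml, σ.sigma11 ∧ π.pi11 ∧
    (∀ n : M.Num, n ∈ X ↔ Sat M (fun _ => n) (fun _ => Y) σ) ∧
    (∀ n : M.Num, n ∈ X ↔ Sat M (fun _ => n) (fun _ => Y) π)

/-- The scheme (*): whatever is definable from `Y` is hyperarithmetical in `Y`. -/
def StarAx (M : L2Model) : Prop :=
  ∀ X ∈ M.Sets, ∀ Y ∈ M.Sets, DefFromInModel M X Y → HypInSem M X Y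

/-- `X ≤_T Y` in the sense of the model: `X` and its complement are both
Σ⁰₁ in `Y` over `M` (Post's characterization of relative recursiveness). -/
def TuringInSem (M : L2Model) (X Y : Set M.Num) : Prop :=
  ∃ σ τ : Fml, σ.sigma01 ∧ τ.sigma01 ∧
    (∀ n : M.Num, n ∈ X ↔ Sat M (fun _ => n) (fun _ => Y) σ) ∧
    (∀ n : M.Num, n ∉ X ↔ Sat M (fun _ => n) (fun _ => Y) τ)

/-- The scheme (**): whatever is definable from `Y` is recursive in `Y`. -/
def StarStarAx (M : L2Model) : Prop :=
  ∀ X ∈ M.Sets, ∀ Y ∈ M.Sets, DefFromInModel M X Y → TuringInSem M X Y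

/-! Internal coding of finite (binary) sequences via Gödel's β-function. -/

/-- `r = c mod (1 + (i+1)d)` — Gödel's β-function. -/
def betaRel (M : L2Model) (c d i r : M.Num) : Prop :=
  ∃ q, c = M.add (M.mul q (M.succ (M.mul (M.succ i) d))) r ∧
    M.lt r (M.succ (M.mul (M.succ i) d))

/-- `s = ⟨l, ⟨c,d⟩⟩` codes a sequence of length `l`. -/
def seqLen (M : L2Model) (s l : M.Num) : Prop := ∃ e, pairRel M l e s

/-- The `i`-th entry of the sequence coded by `s` is `r`. -/
def seqEntry (M : L2Model) (s i r : M.Num) : Prop :=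
  ∃ l e c d, pairRel M l e s ∧ pairRel M c d e ∧ betaRel M c d i r

/-- `s` codes a finite binary sequence. -/
def BinSeqCode (M : L2Model) (s : M.Num) : Prop :=
  ∃ l, seqLen M s l ∧ ∀ i, M.lt i l → ∀ r, seqEntry M s i r →
    M.lt r (M.succ (M.succ M.zero))

/-- The sequence coded by `t` extends the sequence coded by `s`. -/
def SeqExt (M : L2Model) (s t : M.Num) : Prop :=
  ∃ ls lt', seqLen M s ls ∧ seqLen M t lt' ∧ (M.lt ls lt' ∨ ls = lt') ∧
    ∀ i, M.lt i ls → ∀ r, (seqEntry M s i r ↔ seqEntry M t i r)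

/-- `P` is (a set of codes of) a binary tree, closed under initial segments. -/
def TreeSem (M : L2Model) (P : Set M.Num) : Prop :=
  (∀ s ∈ P, BinSeqCode M s) ∧
  ∀ s ∈ P, ∀ t, BinSeqCode M t → SeqExt M t s → t ∈ P

/-- A perfect tree: every node has two incomparable extensions in the tree. -/
def PerfectTreeSem (M : L2Model) (P : Set M.Num) : Prop :=
  TreeSem M P ∧ P.Nonempty ∧
  ∀ s ∈ P, ∃ t₁ ∈ P, ∃ t₂ ∈ P, SeqExt M s t₁ ∧ SeqExt M s t₂ ∧
    ¬ SeqExt M t₁ t₂ ∧ ¬ SeqExt M t₂ t₁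

/-- An infinite binary tree. -/
def InfTreeSem (M : L2Model) (P : Set M.Num) : Prop :=
  TreeSem M P ∧ ∀ l : M.Num, ∃ s ∈ P, ∃ l', seqLen M s l' ∧ (M.lt l l' ∨ l = l')

/-- `X` is a path through the tree `P`. -/
def PathSem (M : L2Model) (X P : Set M.Num) : Prop :=
  ∀ l : M.Num, ∃ s ∈ P, seqLen M s l ∧
    ∀ i, M.lt i l → ((i ∈ X) ↔ seqEntry M s i (M.succ M.zero))

/-- Weak König's lemma. -/
def WKLax (M : L2Model) : Prop :=
  ∀ P ∈ M.Sets, InfTreeSem M P → ∃ X ∈ M.Sets, PathSem M X P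

/-- Henkin model of WKL₀ (= RCA₀ + weak König's lemma). -/
def ModelOfWKL (M : L2Model) : Prop :=
  M.base ∧ M.indAx ∧ Delta01CAax M ∧ Sigma01IndAx M ∧ WKLax M

/-- Provability from a class of models: semantic consequence over Henkin models,
which by the completeness theorem coincides with provability. (For formulas with free
variables this is validity of the universal closure.) -/
def Provable (C : L2Model → Prop) (φ : Fml) : Prop :=
  ∀ M : L2Model, C M → ∀ (v : ℕ → M.Num) (A : ℕ → Set M.Num),
    (∀ i, A i ∈ M.Sets) → Sat M v A φ

/-- `f ∈ M.Sets` codes an isomorphism of the orderings `W` and `R`. -/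
def OrderIsoSem (M : L2Model) (W R : Set M.Num) : Prop :=
  ∃ f ∈ M.Sets,
    (∀ a ∈ fieldOf M W, ∃ b, inPair M a b f ∧ b ∈ fieldOf M R) ∧
    (∀ a b b', inPair M a b f → inPair M a b' f → b = b') ∧
    (∀ a a' b, inPair M a b f → inPair M a' b f → a = a') ∧
    (∀ b ∈ fieldOf M R, ∃ a, a ∈ fieldOf M W ∧ inPair M a b f) ∧
    (∀ a a' b b', inPair M a b f → inPair M a' b' f →
      (inPair M a a' W ↔ inPair M b b' R))

/-! Recursion-theoretic notions over the true naturals. -/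

/-- A recursive (computable) set of naturals. -/
def RecSet (X : Set ℕ) : Prop := ComputablePred fun n => n ∈ X

/-- Partial functions recursive in the oracle `O` (Kleene-style). -/
inductive RecIn (O : ℕ → ℕ) : (ℕ →. ℕ) → Prop
  | zero : RecIn O fun _ => Part.some 0
  | succ : RecIn O fun n => Part.some (n + 1)
  | left : RecIn O fun n => Part.some (Nat.unpair n).1
  | right : RecIn O fun n => Part.some (Nat.unpair n).2
  | oracle : RecIn O fun n => Part.some (O n)
  | pair {f g} : RecIn O f → RecIn O g → RecIn O fun n => Nat.pair <$> f n <*> g n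
  | comp {f g} : RecIn O f → RecIn O g → RecIn O fun n => g n >>= f
  | prec {f g} : RecIn O f → RecIn O g →
      RecIn O (Nat.unpaired fun a n =>
        n.rec (f a) fun y IH => do {let i ← IH; g (Nat.pair a (Nat.pair y i))})
  | rfind {f} : RecIn O f →
      RecIn O fun a => Nat.rfind fun n => (fun m => m = 0) <$> f (Nat.pair a n)

open Classical in
/-- Characteristic function of a set of naturals. -/
noncomputable def chiF (X : Set ℕ) : ℕ → ℕ := fun n => if n ∈ X then 1 else 0

/-- Turing reducibility. -/
def TuringLe (X Y : Set ℕ) : Prop := RecIn (chiF Y) fun n => Part.some (chiF X n)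

/-! Perfect trees over the true naturals (external version). -/

def PrefixClosed (P : Set (List Bool)) : Prop := ∀ s ∈ P, ∀ t : List Bool, t <+: s → t ∈ P

def PerfectTreeExt (P : Set (List Bool)) : Prop :=
  PrefixClosed P ∧ P.Nonempty ∧
  ∀ s ∈ P, ∃ t₁ ∈ P, ∃ t₂ ∈ P, s <+: t₁ ∧ s <+: t₂ ∧ ¬ t₁ <+: t₂ ∧ ¬ t₂ <+: t₁

def IsPathExt (f : ℕ → Bool) (P : Set (List Bool)) : Prop :=
  ∀ n : ℕ, (List.ofFn fun i : Fin n => f i) ∈ P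

def pathSet (f : ℕ → Bool) : Set ℕ := {n | f n = true}


/-! Gandy-style forcing over an arbitrary (countable) Henkin model `(N, 𝒮)`:
conditions are internal codes (elements of `M.Num`) of finite sets of pairs
`⟨e, s⟩` where `s` codes a finite sequence of indices. -/

/-- `c` occurs as an entry of the (code of a) finite set `p`. -/
def entryIn (M : L2Model) (p c : M.Num) : Prop :=
  ∃ l j, seqLen M p l ∧ M.lt j l ∧ seqEntry M p j c

/-- The join `X_{n₁} ⊕ ⋯ ⊕ X_{n_k}` where `s` codes the sequence `⟨n₁,…,n_k⟩`. -/
def joinM (M : L2Model) (s : M.Num) (Xs : M.Num → Set M.Num) : Set M.Num :=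
  {c | ∃ i m ni, pairRel M i m c ∧ (∃ l, seqLen M s l ∧ M.lt i l) ∧
    seqEntry M s i ni ∧ m ∈ Xs ni}

/-- `⟨X_n⟩_{n ∈ |N|}` meets the condition `p`. -/
def MeetsM (M : L2Model) (S : M.Num → Set (Set M.Num))
    (Xs : M.Num → Set M.Num) (p : M.Num) : Prop :=
  ∀ c, entryIn M p c → ∀ e s, pairRel M e s c → joinM M s Xs ∈ S e

/-- The forcing poset `𝒫_{(N,𝒮)}` of meetable conditions. -/
def CondM (M : L2Model) (S : M.Num → Set (Set M.Num)) : Set M.Num :=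
  {p | ∃ Xs : M.Num → Set M.Num, MeetsM M S Xs p}

/-- `p` extends `q` (contains all of `q`'s entries). -/
def extendsC (M : L2Model) (p q : M.Num) : Prop :=
  ∀ c, entryIn M q c → entryIn M p c

def DenseM (M : L2Model) (P D : Set M.Num) : Prop :=
  D ⊆ P ∧ ∀ p ∈ P, ∃ q ∈ D, extendsC M q p

/-- `D` is definable over the model `(N,𝒮)` (with parameters). -/
def DefinableOverModel (M : L2Model) (D : Set M.Num) : Prop :=
  ∃ (φ : Fml) (v : ℕ → M.Num) (A : ℕ → Set M.Num), (∀ i, A i ∈ M.Sets) ∧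
    ∀ a : M.Num, a ∈ D ↔ Sat M (Function.update v 0 a) A φ

/-- Replace the second-order part of a model. -/
def withSets (M : L2Model) (𝒮 : Set (Set M.Num)) : L2Model :=
  ⟨M.Num, M.zero, M.succ, M.add, M.mul, 𝒮⟩

/-- The full model over the same first-order part. -/
def fullOf (M : L2Model) : L2Model := withSets M Set.univ

/-- `𝒞` is a Σ¹₁ class of subsets of `|N|` in the sense of the model `N`. -/
def Sigma11ClassM (M : L2Model) (𝒞 : Set (Set M.Num)) : Prop :=
  ∃ φ : Fml, φ.sigma11 ∧
    ∀ X : Set M.Num, X ∈ 𝒞 ↔ Sat (fullOf M) (fun _ => M.zero) (fun _ => X) φ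

/-- `S` enumerates the Σ¹₁ classes in the sense of the model. -/
def IsS11EnumM (M : L2Model) (S : M.Num → Set (Set M.Num)) : Prop :=
  (∀ e, Sigma11ClassM M (S e)) ∧ ∀ 𝒞, Sigma11ClassM M 𝒞 → ∃ e, S e = 𝒞

/-- `⟨G_n⟩_{n∈|N|}` is generic over `(N, 𝒮)`: it meets every dense subset of
`𝒫_{(N,𝒮)}` definable over `(N, 𝒮)`. -/
def GenericOverModel (M : L2Model) (S : M.Num → Set (Set M.Num))
    (G : M.Num → Set M.Num) : Prop :=
  ∀ D : Set M.Num, DenseM M (CondM M S) D → DefinableOverModel M D →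
    ∃ p ∈ D, MeetsM M S G p

end SOA

namespace SOA
open Classical

noncomputable section

abbrev stdU : L2Model := ⟨ℕ, 0, Nat.succ, (· + ·), (· * ·), Set.univ⟩

lemma stdModel_lt {𝒮 : Set (Set ℕ)} {a b : ℕ} : (stdModel 𝒮).lt a b ↔ a < b := by
  constructor
  · rintro ⟨k, hk⟩
    simp only [stdModel] at hk
    omega
  · intro h
    exact ⟨b - a - 1, by simp only [stdModel]; omega⟩

/-- ℕ-valued term evaluation in the full standard model. -/
def tval (v : ℕ → ℕ) : Term → ℕ
  | .var n => v n
  | .zero => 0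
  | .succ t => tval v t + 1
  | .add t u => tval v t + tval v u
  | .mul t u => tval v t * tval v u

lemma val_eq_tval (v : ℕ → ℕ) (t : Term) : t.val stdU v = tval v t := by
  induction t with
  | var n => rfl
  | zero => rfl
  | succ t ih =>
      show Nat.succ (t.val stdU v) = tval v t + 1
      rw [ih]
  | add t u iht ihu =>
      show Nat.add (t.val stdU v) (u.val stdU v) = Nat.add (tval v t) (tval v u)
      rw [iht, ihu]
  | mul t u iht ihu =>
      show Nat.mul (t.val stdU v) (u.val stdU v) = Nat.mul (tval v t) (tval v u)
      rw [iht, ihu]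

@[simp] lemma Sat_eq' {v : ℕ → ℕ} {A : ℕ → Set ℕ} {t u : Term} :
    Sat stdU v A (.eq t u) ↔ tval v t = tval v u := by
  rw [← val_eq_tval v t, ← val_eq_tval v u]; exact Iff.rfl

@[simp] lemma Sat_lt' {v : ℕ → ℕ} {A : ℕ → Set ℕ} {t u : Term} :
    Sat stdU v A (.lt t u) ↔ tval v t < tval v u := by
  rw [← val_eq_tval v t, ← val_eq_tval v u]; exact stdModel_lt

@[simp] lemma Sat_mem' {v : ℕ → ℕ} {A : ℕ → Set ℕ} {t : Term} {i : ℕ} :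
    Sat stdU v A (.mem t i) ↔ tval v t ∈ A i := by
  rw [← val_eq_tval v t]; exact Iff.rfl

@[simp] lemma Sat_not' {M v A} {φ : Fml} : Sat M v A (.not φ) ↔ ¬ Sat M v A φ := Iff.rfl
@[simp] lemma Sat_and' {M v A} {φ ψ : Fml} :
    Sat M v A (.and φ ψ) ↔ Sat M v A φ ∧ Sat M v A ψ := Iff.rfl
@[simp] lemma Sat_nall' {M : L2Model} {v A} {x : ℕ} {φ : Fml} :
    Sat M v A (.nall x φ) ↔ ∀ a, Sat M (Function.update v x a) A φ := Iff.rfl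
@[simp] lemma Sat_nex' {M : L2Model} {v A} {x : ℕ} {φ : Fml} :
    Sat M v A (.nex x φ) ↔ ∃ a, Sat M (Function.update v x a) A φ := Iff.rfl

@[simp] lemma Sat_ballLt' {v : ℕ → ℕ} {A : ℕ → Set ℕ} {x : ℕ} {t : Term} {φ : Fml} :
    Sat stdU v A (.ballLt x t φ) ↔
      ∀ a, a < tval v t → Sat stdU (Function.update v x a) A φ := by
  refine Iff.trans (show Sat stdU v A (.ballLt x t φ) ↔
    ∀ a : ℕ, stdU.lt a (t.val stdU v) → Sat stdU (Function.update v x a) A φ from Iff.rfl) ?_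
  refine forall_congr' fun a => imp_congr ?_ Iff.rfl
  rw [← val_eq_tval v t]; exact stdModel_lt

@[simp] lemma Sat_bexLt' {v : ℕ → ℕ} {A : ℕ → Set ℕ} {x : ℕ} {t : Term} {φ : Fml} :
    Sat stdU v A (.bexLt x t φ) ↔
      ∃ a, a < tval v t ∧ Sat stdU (Function.update v x a) A φ := by
  refine Iff.trans (show Sat stdU v A (.bexLt x t φ) ↔
    ∃ a : ℕ, stdU.lt a (t.val stdU v) ∧ Sat stdU (Function.update v x a) A φ from Iff.rfl) ?_
  refine exists_congr fun a => and_congr ?_ Iff.rfl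
  rw [← val_eq_tval v t]; exact stdModel_lt

@[simp] lemma Sat_sex' {M : L2Model} {v A} {X : ℕ} {φ : Fml} :
    Sat M v A (.sex X φ) ↔ ∃ S ∈ M.Sets, Sat M v (Function.update A X S) φ := Iff.rfl

def numeral : ℕ → Term
  | 0 => .zero
  | n+1 => .succ (numeral n)

@[simp] lemma tval_numeral (v : ℕ → ℕ) (n : ℕ) : tval v (numeral n) = n := by
  induction n with
  | zero => rfl
  | succ n ih => simp [numeral, tval, ih]

def Fml.orF (φ ψ : Fml) : Fml := .not ((φ.not).and (ψ.not))
def Fml.impF (φ ψ : Fml) : Fml := .not (φ.and ψ.not)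

@[simp] lemma Sat_orF {M v A φ ψ} : Sat M v A (Fml.orF φ ψ) ↔ Sat M v A φ ∨ Sat M v A ψ := by
  simp only [Fml.orF, Sat]; tauto

@[simp] lemma Sat_impF {M v A φ ψ} : Sat M v A (Fml.impF φ ψ) ↔ (Sat M v A φ → Sat M v A ψ) := by
  simp only [Fml.impF, Sat]; tauto

lemma arith_orF {φ ψ : Fml} (h1 : φ.arithmetical) (h2 : ψ.arithmetical) :
    (Fml.orF φ ψ).arithmetical := ⟨h1, h2⟩

lemma arith_impF {φ ψ : Fml} (h1 : φ.arithmetical) (h2 : ψ.arithmetical) :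
    (Fml.impF φ ψ).arithmetical := ⟨h1, h2⟩

/-- `pairF t u w` says `Nat.pair (val t) (val u) = val w`. -/
def pairF (t u w : Term) : Fml :=
  Fml.orF ((Fml.lt t u).and (.eq w (.add (.mul u u) t)))
          ((Fml.not (.lt t u)).and (.eq w (.add (.add (.mul t t) t) u)))

lemma arith_pairF {t u w} : (pairF t u w).arithmetical := ⟨⟨trivial, trivial⟩, ⟨trivial, trivial⟩⟩

@[simp] lemma Sat_pairF {v : ℕ → ℕ} {A : ℕ → Set ℕ} {t u w : Term} :
    Sat stdU v A (pairF t u w) ↔ Nat.pair (tval v t) (tval v u) = tval v w := by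
  simp only [pairF, Sat_orF, Sat_and', Sat_not', Sat_lt', Sat_eq', tval, Nat.pair]
  by_cases hl : tval v t < tval v u
  · rw [if_pos hl]
    constructor
    · rintro (⟨_, h⟩ | ⟨hn, _⟩)
      · exact h.symm
      · exact absurd hl hn
    · intro h; exact Or.inl ⟨hl, h.symm⟩
  · rw [if_neg hl]
    constructor
    · rintro (⟨h, _⟩ | ⟨_, h⟩)
      · exact absurd h hl
      · exact h.symm
    · intro h; exact Or.inr ⟨hl, h.symm⟩

/-! Even-variable predicates -/

def Term.Ev : Term → Prop
  | .var n => n % 2 = 0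
  | .zero => True
  | .succ t => t.Ev
  | .add t u => t.Ev ∧ u.Ev
  | .mul t u => t.Ev ∧ u.Ev

def Fml.Ev : Fml → Prop
  | .eq t u => t.Ev ∧ u.Ev
  | .lt t u => t.Ev ∧ u.Ev
  | .mem t i => t.Ev ∧ i % 2 = 0
  | .not φ => φ.Ev
  | .and φ ψ => φ.Ev ∧ ψ.Ev
  | .nall x φ => x % 2 = 0 ∧ φ.Ev
  | .nex x φ => x % 2 = 0 ∧ φ.Ev
  | .ballLt x t φ => x % 2 = 0 ∧ t.Ev ∧ φ.Ev
  | .bexLt x t φ => x % 2 = 0 ∧ t.Ev ∧ φ.Ev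
  | .sall _ _ => False
  | .sex _ _ => False

lemma val_congr {M : L2Model} {v w : ℕ → M.Num} (t : Term)
    (ht : t.Ev) (h : ∀ x, x % 2 = 0 → v x = w x) : t.val M v = t.val M w := by
  induction t with
  | var n => exact h n ht
  | zero => rfl
  | succ t ih => simp only [Term.val, ih ht]
  | add t u iht ihu => simp only [Term.val, iht ht.1, ihu ht.2]
  | mul t u iht ihu => simp only [Term.val, iht ht.1, ihu ht.2]

/-- value of a term is unchanged by updating an odd variable -/
lemma val_update_odd {M : L2Model} {v : ℕ → M.Num} (t : Term) (ht : t.Ev)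
    {y : ℕ} (hy : y % 2 = 1) (a : M.Num) :
    t.val M (Function.update v y a) = t.val M v := by
  refine val_congr t ht fun x hx => ?_
  rw [Function.update_of_ne (by omega)]

/-! Doubling of variables -/

def Term.mapE : Term → Term
  | .var n => .var (2*n)
  | .zero => .zero
  | .succ t => .succ t.mapE
  | .add t u => .add t.mapE u.mapE
  | .mul t u => .mul t.mapE u.mapE

lemma val_mapE {M : L2Model} (t : Term) (v : ℕ → M.Num) :
    t.mapE.val M v = t.val M (fun x => v (2*x)) := by
  induction t with
  | var n => rfl
  | zero => rfl
  | succ t ih => simp only [Term.mapE, Term.val, ih]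
  | add t u iht ihu => simp only [Term.mapE, Term.val, iht, ihu]
  | mul t u iht ihu => simp only [Term.mapE, Term.val, iht, ihu]

lemma mapE_Ev (t : Term) : t.mapE.Ev := by
  induction t with
  | var n => simp [Term.mapE, Term.Ev, Nat.mul_mod_right]
  | zero => trivial
  | succ t ih => exact ih
  | add t u iht ihu => exact ⟨iht, ihu⟩
  | mul t u iht ihu => exact ⟨iht, ihu⟩

def Fml.mapEven : Fml → Fml
  | .eq t u => .eq t.mapE u.mapE
  | .lt t u => .lt t.mapE u.mapE
  | .mem t i => .mem t.mapE (2*i)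
  | .not φ => .not φ.mapEven
  | .and φ ψ => .and φ.mapEven ψ.mapEven
  | .nall x φ => .nall (2*x) φ.mapEven
  | .nex x φ => .nex (2*x) φ.mapEven
  | .ballLt x t φ => .ballLt (2*x) t.mapE φ.mapEven
  | .bexLt x t φ => .bexLt (2*x) t.mapE φ.mapEven
  | .sall X φ => .sall X φ.mapEven
  | .sex X φ => .sex X φ.mapEven

lemma mapEven_arith {φ : Fml} (h : φ.arithmetical) : φ.mapEven.arithmetical := by
  induction φ with
  | eq t u => trivial
  | lt t u => trivial
  | mem t i => trivial
  | not φ ih => exact ih h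
  | and φ ψ ih1 ih2 => exact ⟨ih1 h.1, ih2 h.2⟩
  | nall x φ ih => exact ih h
  | nex x φ ih => exact ih h
  | ballLt x t φ ih => exact ih h
  | bexLt x t φ ih => exact ih h
  | sall X φ ih => exact h.elim
  | sex X φ ih => exact h.elim

lemma mapEven_Ev {φ : Fml} (h : φ.arithmetical) : φ.mapEven.Ev := by
  induction φ with
  | eq t u => exact ⟨mapE_Ev t, mapE_Ev u⟩
  | lt t u => exact ⟨mapE_Ev t, mapE_Ev u⟩
  | mem t i => exact ⟨mapE_Ev t, by omega⟩
  | not φ ih => exact ih h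
  | and φ ψ ih1 ih2 => exact ⟨ih1 h.1, ih2 h.2⟩
  | nall x φ ih => exact ⟨by omega, ih h⟩
  | nex x φ ih => exact ⟨by omega, ih h⟩
  | ballLt x t φ ih => exact ⟨by omega, mapE_Ev t, ih h⟩
  | bexLt x t φ ih => exact ⟨by omega, mapE_Ev t, ih h⟩
  | sall X φ ih => exact h.elim
  | sex X φ ih => exact h.elim

private lemma update_comp2 {α : Type} (v : ℕ → α) (x : ℕ) (a : α) :
    (fun y => Function.update v (2*x) a (2*y)) = Function.update (fun y => v (2*y)) x a := by
  funext y
  by_cases hy : y = x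
  · subst hy; simp
  · rw [Function.update_of_ne (by omega), Function.update_of_ne hy]

lemma Sat_mapEven {M : L2Model} {φ : Fml} (hφ : φ.arithmetical) :
    ∀ (v : ℕ → M.Num) (A : ℕ → Set M.Num),
      Sat M v A φ.mapEven ↔ Sat M (fun x => v (2*x)) (fun i => A (2*i)) φ := by
  induction φ with
  | eq t u => intro v A; simp only [Fml.mapEven, Sat, val_mapE]
  | lt t u => intro v A; simp only [Fml.mapEven, Sat, val_mapE]
  | mem t i => intro v A; simp only [Fml.mapEven, Sat, val_mapE]
  | not φ ih => intro v A; simp only [Fml.mapEven, Sat, ih hφ]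
  | and φ ψ ih1 ih2 => intro v A; simp only [Fml.mapEven, Sat, ih1 hφ.1, ih2 hφ.2]
  | nall x φ ih =>
      intro v A
      simp only [Fml.mapEven, Sat]
      refine forall_congr' fun a => ?_
      rw [ih hφ, update_comp2]
  | nex x φ ih =>
      intro v A
      simp only [Fml.mapEven, Sat]
      refine exists_congr fun a => ?_
      rw [ih hφ, update_comp2]
  | ballLt x t φ ih =>
      intro v A
      simp only [Fml.mapEven, Sat, val_mapE]
      refine forall_congr' fun a => imp_congr Iff.rfl ?_
      rw [ih hφ, update_comp2]
  | bexLt x t φ ih =>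
      intro v A
      simp only [Fml.mapEven, Sat, val_mapE]
      refine exists_congr fun a => and_congr Iff.rfl ?_
      rw [ih hφ, update_comp2]
  | sall X φ ih => exact hφ.elim
  | sex X φ ih => exact hφ.elim

/-! Trace bookkeeping -/

def extt (tr a : ℕ) : ℕ := Nat.pair tr a + 1
def predt (x : ℕ) : ℕ := (Nat.unpair (x - 1)).1

@[simp] lemma predt_extt {tr a : ℕ} : predt (extt tr a) = tr := by
  simp [predt, extt, Nat.unpair_pair]

lemma predt_le (x : ℕ) : predt x ≤ x :=
  le_trans (Nat.unpair_left_le _) (Nat.sub_le _ _)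

lemma lt_extt {tr a : ℕ} : tr < extt tr a :=
  Nat.lt_succ_of_le (Nat.left_le_pair _ _)

def Extt (t x : ℕ) : Prop := ∃ k, predt^[k] x = t

lemma Extt.refl (t : ℕ) : Extt t t := ⟨0, rfl⟩

lemma Extt.step {t x : ℕ} (h : Extt t x) (a : ℕ) : Extt t (extt x a) := by
  obtain ⟨k, hk⟩ := h
  exact ⟨k + 1, by rw [Function.iterate_succ_apply, predt_extt, hk]⟩

lemma Extt.trans {t x y : ℕ} (h1 : Extt t x) (h2 : Extt x y) : Extt t y := by
  obtain ⟨k1, hk1⟩ := h1; obtain ⟨k2, hk2⟩ := h2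
  exact ⟨k1 + k2, by rw [Function.iterate_add_apply, hk2, hk1]⟩

lemma predt_iter_le (k x : ℕ) : predt^[k] x ≤ x := by
  induction k generalizing x with
  | zero => rfl
  | succ k ih => rw [Function.iterate_succ_apply]; exact le_trans (ih _) (predt_le x)

lemma Extt.le {t x : ℕ} (h : Extt t x) : t ≤ x := by
  obtain ⟨k, hk⟩ := h; rw [← hk]; exact predt_iter_le k x

private lemma extt_chain {tr a b x : ℕ} {j k : ℕ} (hjk : j ≤ k)
    (hj : predt^[j] x = extt tr a) (hk : predt^[k] x = extt tr b) : a = b := by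
  have key : predt^[k - j] (extt tr a) = extt tr b := by
    rw [← hj, ← Function.iterate_add_apply, show k - j + j = k by omega, hk]
  rcases Nat.eq_zero_or_pos (k - j) with h0 | hpos
  · rw [h0] at key
    simpa [extt, Nat.pair_eq_pair] using key
  · exfalso
    obtain ⟨m, hm⟩ : ∃ m, k - j = m + 1 := ⟨k - j - 1, by omega⟩
    rw [hm, Function.iterate_succ_apply, predt_extt] at key
    have := predt_iter_le m tr
    rw [key] at this
    exact absurd this (not_le.mpr lt_extt)

lemma extt_inj {tr a b x : ℕ} (ha : Extt (extt tr a) x) (hb : Extt (extt tr b) x) : a = b := by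
  obtain ⟨j, hj⟩ := ha; obtain ⟨k, hk⟩ := hb
  rcases le_total j k with h | h
  · exact extt_chain h hj hk
  · exact (extt_chain h hk hj).symm

lemma not_Extt_child_self {tr a : ℕ} : ¬ Extt (extt tr a) tr :=
  fun h => absurd h.le (not_le.mpr lt_extt)

end
end SOA

namespace SOA
open Classical

noncomputable section

/-- Skolemized satisfaction with Skolem oracle `h` and trace `tr`. -/
def Q (h : ℕ → ℕ) : Fml → Bool → ℕ → (ℕ → ℕ) → (ℕ → Set ℕ) → Prop
  | .eq t u, b, _, v, _ => ((tval v t = tval v u) ↔ b = true)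
  | .lt t u, b, _, v, _ => ((tval v t < tval v u) ↔ b = true)
  | .mem t i, b, _, v, A => ((tval v t ∈ A i) ↔ b = true)
  | .not φ, b, tr, v, A => Q h φ (!b) tr v A
  | .and φ ψ, true, tr, v, A => Q h φ true (extt tr 0) v A ∧ Q h ψ true (extt tr 1) v A
  | .and φ ψ, false, tr, v, A => Q h φ false (extt tr 0) v A ∨ Q h ψ false (extt tr 1) v A
  | .nall x φ, true, tr, v, A => ∀ a, Q h φ true (extt tr a) (Function.update v x a) A
  | .nall x φ, false, tr, v, A =>
      Q h φ false (extt tr (h tr)) (Function.update v x (h tr)) A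
  | .nex x φ, true, tr, v, A =>
      Q h φ true (extt tr (h tr)) (Function.update v x (h tr)) A
  | .nex x φ, false, tr, v, A => ∀ a, Q h φ false (extt tr a) (Function.update v x a) A
  | .ballLt x t φ, true, tr, v, A =>
      ∀ a, a < tval v t → Q h φ true (extt tr a) (Function.update v x a) A
  | .ballLt x t φ, false, tr, v, A =>
      ∃ a, a < tval v t ∧ Q h φ false (extt tr a) (Function.update v x a) A
  | .bexLt x t φ, true, tr, v, A =>
      ∃ a, a < tval v t ∧ Q h φ true (extt tr a) (Function.update v x a) A
  | .bexLt x t φ, false, tr, v, A =>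
      ∀ a, a < tval v t → Q h φ false (extt tr a) (Function.update v x a) A
  | .sall _ _, _, _, _, _ => False
  | .sex _ _, _, _, _, _ => False

/-- Soundness: `Q` determines truth. -/
lemma Q_sound {φ : Fml} (hφ : φ.arithmetical) :
    ∀ {h : ℕ → ℕ} {b : Bool} {tr : ℕ} {v : ℕ → ℕ} {A : ℕ → Set ℕ},
      Q h φ b tr v A → (Sat stdU v A φ ↔ b = true) := by
  induction φ with
  | eq t u => intro h b tr v A hq; rw [Sat_eq']; exact hq
  | lt t u => intro h b tr v A hq; rw [Sat_lt']; exact hq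
  | mem t i => intro h b tr v A hq; rw [Sat_mem']; exact hq
  | not φ ih =>
      intro h b tr v A hq
      have := ih hφ hq
      rw [Sat_not']
      cases b <;> simp_all
  | and φ ψ ih1 ih2 =>
      intro h b tr v A hq
      rw [Sat_and']
      cases b with
      | true =>
          obtain ⟨h1, h2⟩ := hq
          simp [ih1 hφ.1 h1, ih2 hφ.2 h2]
      | false =>
          rcases hq with h1 | h2
          · have := ih1 hφ.1 h1; simp_all
          · have := ih2 hφ.2 h2; simp_all
  | nall x φ ih =>
      intro h b tr v A hq
      rw [Sat_nall']
      cases b with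
      | true => exact iff_of_true (fun a => (ih hφ (hq a)).mpr rfl) rfl
      | false =>
          refine iff_of_false (fun hall => ?_) (by simp)
          simpa using (ih hφ hq).mp (hall _)
  | nex x φ ih =>
      intro h b tr v A hq
      rw [Sat_nex']
      cases b with
      | true => exact iff_of_true ⟨_, (ih hφ hq).mpr rfl⟩ rfl
      | false =>
          refine iff_of_false (fun hex => ?_) (by simp)
          obtain ⟨a, ha⟩ := hex
          simpa using (ih hφ (hq a)).mp ha
  | ballLt x t φ ih =>
      intro h b tr v A hq
      rw [Sat_ballLt']
      cases b with
      | true => exact iff_of_true (fun a ha => (ih hφ (hq a ha)).mpr rfl) rfl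
      | false =>
          obtain ⟨a, ha, hqa⟩ := hq
          refine iff_of_false (fun hall => ?_) (by simp)
          simpa using (ih hφ hqa).mp (hall a ha)
  | bexLt x t φ ih =>
      intro h b tr v A hq
      rw [Sat_bexLt']
      cases b with
      | true =>
          obtain ⟨a, ha, hqa⟩ := hq
          exact iff_of_true ⟨a, ha, (ih hφ hqa).mpr rfl⟩ rfl
      | false =>
          refine iff_of_false (fun hex => ?_) (by simp)
          obtain ⟨a, ha, hsa⟩ := hex
          simpa using (ih hφ (hq a ha)).mp hsa
  | sall X φ ih => exact fun hq => hφ.elim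
  | sex X φ ih => exact fun hq => hφ.elim

/-- `Q` only depends on `h` on the cone above `tr`. -/
lemma Q_congr {φ : Fml} (hφ : φ.arithmetical) :
    ∀ {h h' : ℕ → ℕ} {b tr v A}, (∀ x, Extt tr x → h x = h' x) →
      (Q h φ b tr v A ↔ Q h' φ b tr v A) := by
  have cone : ∀ tr a x, Extt (extt tr a) x → Extt tr x :=
    fun tr a x hx => Extt.trans ((Extt.refl tr).step a) hx
  induction φ with
  | eq t u => intro h h' b tr v A _; exact Iff.rfl
  | lt t u => intro h h' b tr v A _; exact Iff.rfl
  | mem t i => intro h h' b tr v A _; exact Iff.rfl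
  | not φ ih => intro h h' b tr v A hagree; exact ih hφ hagree
  | and φ ψ ih1 ih2 =>
      intro h h' b tr v A hagree
      cases b with
      | true => exact and_congr (ih1 hφ.1 fun x hx => hagree x (cone _ _ _ hx))
                  (ih2 hφ.2 fun x hx => hagree x (cone _ _ _ hx))
      | false => exact or_congr (ih1 hφ.1 fun x hx => hagree x (cone _ _ _ hx))
                  (ih2 hφ.2 fun x hx => hagree x (cone _ _ _ hx))
  | nall x φ ih =>
      intro h h' b tr v A hagree
      cases b with
      | true => exact forall_congr' fun a => ih hφ fun y hy => hagree y (cone _ _ _ hy)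
      | false =>
          show Q h φ false (extt tr (h tr)) (Function.update v x (h tr)) A ↔
            Q h' φ false (extt tr (h' tr)) (Function.update v x (h' tr)) A
          rw [hagree tr (Extt.refl tr)]
          exact ih hφ fun y hy => hagree y (cone _ _ _ hy)
  | nex x φ ih =>
      intro h h' b tr v A hagree
      cases b with
      | true =>
          show Q h φ true (extt tr (h tr)) (Function.update v x (h tr)) A ↔
            Q h' φ true (extt tr (h' tr)) (Function.update v x (h' tr)) A
          rw [hagree tr (Extt.refl tr)]
          exact ih hφ fun y hy => hagree y (cone _ _ _ hy)
      | false => exact forall_congr' fun a => ih hφ fun y hy => hagree y (cone _ _ _ hy)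
  | ballLt x t φ ih =>
      intro h h' b tr v A hagree
      cases b with
      | true => exact forall_congr' fun a => imp_congr Iff.rfl
                  (ih hφ fun y hy => hagree y (cone _ _ _ hy))
      | false => exact exists_congr fun a => and_congr Iff.rfl
                  (ih hφ fun y hy => hagree y (cone _ _ _ hy))
  | bexLt x t φ ih =>
      intro h h' b tr v A hagree
      cases b with
      | true => exact exists_congr fun a => and_congr Iff.rfl
                  (ih hφ fun y hy => hagree y (cone _ _ _ hy))
      | false => exact forall_congr' fun a => imp_congr Iff.rfl
                  (ih hφ fun y hy => hagree y (cone _ _ _ hy))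
  | sall X φ ih => exact hφ.elim
  | sex X φ ih => exact hφ.elim

/-- Merge a family of Skolem functions along disjoint cones. -/
def mergeH (tr : ℕ) (F : ℕ → ℕ → ℕ) : ℕ → ℕ :=
  fun x => if hx : ∃ a, Extt (extt tr a) x then F (Classical.choose hx) x else 0

lemma mergeH_eq {tr : ℕ} {F : ℕ → ℕ → ℕ} {a x : ℕ} (hx : Extt (extt tr a) x) :
    mergeH tr F x = F a x := by
  have hex : ∃ a', Extt (extt tr a') x := ⟨a, hx⟩
  rw [mergeH, dif_pos hex]
  rw [extt_inj (Classical.choose_spec hex) hx]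

/-- Completeness: truth values are witnessed by some Skolem function. -/
lemma Q_complete {φ : Fml} (hφ : φ.arithmetical) :
    ∀ (b : Bool) (tr : ℕ) (v : ℕ → ℕ) (A : ℕ → Set ℕ),
      (Sat stdU v A φ ↔ b = true) → ∃ h, Q h φ b tr v A := by
  induction φ with
  | eq t u => intro b tr v A hs; exact ⟨fun _ => 0, by rw [Sat_eq'] at hs; exact hs⟩
  | lt t u => intro b tr v A hs; exact ⟨fun _ => 0, by rw [Sat_lt'] at hs; exact hs⟩
  | mem t i => intro b tr v A hs; exact ⟨fun _ => 0, by rw [Sat_mem'] at hs; exact hs⟩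
  | not φ ih =>
      intro b tr v A hs
      rw [Sat_not'] at hs
      refine ih hφ (!b) tr v A ?_
      cases b <;> simp_all
  | and φ ψ ih1 ih2 =>
      intro b tr v A hs
      rw [Sat_and'] at hs
      cases b with
      | true =>
          simp only [iff_true] at hs
          obtain ⟨h1, hq1⟩ := ih1 hφ.1 true (extt tr 0) v A (iff_of_true hs.1 rfl)
          obtain ⟨h2, hq2⟩ := ih2 hφ.2 true (extt tr 1) v A (iff_of_true hs.2 rfl)
          refine ⟨mergeH tr (fun a => if a = 0 then h1 else h2), ?_, ?_⟩
          · exact (Q_congr hφ.1 fun y hy => by rw [mergeH_eq hy]; simp).mpr hq1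
          · exact (Q_congr hφ.2 fun y hy => by rw [mergeH_eq hy]; simp).mpr hq2
      | false =>
          replace hs : ¬ _ := fun hx => by simpa using hs.mp hx
          by_cases h1 : Sat stdU v A φ
          · have h2 : ¬ Sat stdU v A ψ := fun h2 => hs ⟨h1, h2⟩
            obtain ⟨h', hq⟩ := ih2 hφ.2 false (extt tr 1) v A (iff_of_false h2 (by simp))
            exact ⟨h', Or.inr hq⟩
          · obtain ⟨h', hq⟩ := ih1 hφ.1 false (extt tr 0) v A (iff_of_false h1 (by simp))
            exact ⟨h', Or.inl hq⟩
  | nall x φ ih =>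
      intro b tr v A hs
      have hφ' : φ.arithmetical := hφ
      rw [Sat_nall'] at hs
      cases b with
      | true =>
          simp only [iff_true] at hs
          have key : ∀ a, ∃ h, Q h φ true (extt tr a) (Function.update v x a) A :=
            fun a => ih hφ' true (extt tr a) _ A (iff_of_true (hs a) rfl)
          choose F hF using key
          refine ⟨mergeH tr F, ?_⟩
          show ∀ a, Q (mergeH tr F) φ true (extt tr a) (Function.update v x a) A
          intro a
          exact (Q_congr hφ' fun y hy => by rw [mergeH_eq hy]).mpr (hF a)
      | false =>
          replace hs : ¬ ∀ a, Sat stdU (Function.update v x a) A φ :=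
            fun hx => by simpa using hs.mp hx
          push_neg at hs
          obtain ⟨a, ha⟩ := hs
          obtain ⟨hc, hqc⟩ := ih hφ' false (extt tr a) (Function.update v x a) A
            (iff_of_false ha (by simp))
          refine ⟨fun y => if y = tr then a else hc y, ?_⟩
          show Q _ φ false (extt tr (if tr = tr then a else hc tr))
            (Function.update v x (if tr = tr then a else hc tr)) A
          rw [if_pos rfl]
          refine (Q_congr hφ' fun y hy => ?_).mpr hqc
          rw [if_neg]
          intro hy'
          subst hy'
          exact not_Extt_child_self hy
  | nex x φ ih =>
      intro b tr v A hs
      have hφ' : φ.arithmetical := hφ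
      rw [Sat_nex'] at hs
      cases b with
      | true =>
          simp only [iff_true] at hs
          obtain ⟨a, ha⟩ := hs
          obtain ⟨hc, hqc⟩ := ih hφ' true (extt tr a) (Function.update v x a) A
            (iff_of_true ha rfl)
          refine ⟨fun y => if y = tr then a else hc y, ?_⟩
          show Q _ φ true (extt tr (if tr = tr then a else hc tr))
            (Function.update v x (if tr = tr then a else hc tr)) A
          rw [if_pos rfl]
          refine (Q_congr hφ' fun y hy => ?_).mpr hqc
          rw [if_neg]
          intro hy'
          subst hy'
          exact not_Extt_child_self hy
      | false =>
          replace hs : ¬ ∃ a, Sat stdU (Function.update v x a) A φ :=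
            fun hx => by simpa using hs.mp hx
          push_neg at hs
          have key : ∀ a, ∃ h, Q h φ false (extt tr a) (Function.update v x a) A :=
            fun a => ih hφ' false (extt tr a) _ A (iff_of_false (hs a) (by simp))
          choose F hF using key
          refine ⟨mergeH tr F, ?_⟩
          show ∀ a, Q (mergeH tr F) φ false (extt tr a) (Function.update v x a) A
          intro a
          exact (Q_congr hφ' fun y hy => by rw [mergeH_eq hy]).mpr (hF a)
  | ballLt x t φ ih =>
      intro b tr v A hs
      have hφ' : φ.arithmetical := hφ
      rw [Sat_ballLt'] at hs
      cases b with
      | true =>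
          simp only [iff_true] at hs
          have key : ∀ a, ∃ h, a < tval v t → Q h φ true (extt tr a) (Function.update v x a) A := by
            intro a
            by_cases ha : a < tval v t
            · obtain ⟨h', hq⟩ := ih hφ' true (extt tr a) _ A (iff_of_true (hs a ha) rfl)
              exact ⟨h', fun _ => hq⟩
            · exact ⟨fun _ => 0, fun hc => absurd hc ha⟩
          choose F hF using key
          refine ⟨mergeH tr F, ?_⟩
          show ∀ a, a < tval v t → Q (mergeH tr F) φ true (extt tr a) (Function.update v x a) A
          intro a ha
          exact (Q_congr hφ' fun y hy => by rw [mergeH_eq hy]).mpr (hF a ha)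
      | false =>
          replace hs : ¬ ∀ a, a < tval v t → Sat stdU (Function.update v x a) A φ :=
            fun hx => by simpa using hs.mp hx
          push_neg at hs
          obtain ⟨a, ha, hna⟩ := hs
          obtain ⟨h', hq⟩ := ih hφ' false (extt tr a) (Function.update v x a) A
            (iff_of_false hna (by simp))
          exact ⟨h', a, ha, hq⟩
  | bexLt x t φ ih =>
      intro b tr v A hs
      have hφ' : φ.arithmetical := hφ
      rw [Sat_bexLt'] at hs
      cases b with
      | true =>
          simp only [iff_true] at hs
          obtain ⟨a, ha, hsa⟩ := hs
          obtain ⟨h', hq⟩ := ih hφ' true (extt tr a) (Function.update v x a) A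
            (iff_of_true hsa rfl)
          exact ⟨h', a, ha, hq⟩
      | false =>
          replace hs : ¬ ∃ a, a < tval v t ∧ Sat stdU (Function.update v x a) A φ :=
            fun hx => by simpa using hs.mp hx
          push_neg at hs
          have key : ∀ a, ∃ h, a < tval v t → Q h φ false (extt tr a) (Function.update v x a) A := by
            intro a
            by_cases ha : a < tval v t
            · obtain ⟨h', hq⟩ := ih hφ' false (extt tr a) _ A
                (iff_of_false (hs a ha) (by simp))
              exact ⟨h', fun _ => hq⟩
            · exact ⟨fun _ => 0, fun hc => absurd hc ha⟩
          choose F hF using key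
          refine ⟨mergeH tr F, ?_⟩
          show ∀ a, a < tval v t → Q (mergeH tr F) φ false (extt tr a) (Function.update v x a) A
          intro a ha
          exact (Q_congr hφ' fun y hy => by rw [mergeH_eq hy]).mpr (hF a ha)
  | sall X φ ih => exact fun b tr v A hs => hφ.elim
  | sex X φ ih => exact fun b tr v A hs => hφ.elim

lemma Sat_iff_exists_Q {φ : Fml} (hφ : φ.arithmetical) {tr v} {A : ℕ → Set ℕ} :
    Sat stdU v A φ ↔ ∃ h, Q h φ true tr v A := by
  constructor
  · intro hs; exact Q_complete hφ true tr v A (iff_of_true hs rfl)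
  · rintro ⟨h, hq⟩; exact (Q_sound hφ hq).mpr rfl

/-- Closedness of `Q` under finite approximation. -/
lemma Q_closed {φ : Fml} (hφ : φ.arithmetical) :
    ∀ (b : Bool) (tr : ℕ) (v : ℕ → ℕ) (Ai : ℕ → Set ℕ) (hi : ℕ → ℕ),
      (∀ n : ℕ, ∃ (A' : ℕ → Set ℕ) (h' : ℕ → ℕ),
        (∀ i j : ℕ, i < n → j < n → (j ∈ A' i ↔ j ∈ Ai i)) ∧
        (∀ k, k < n → h' k = hi k) ∧ Q h' φ b tr v A') →
      Q hi φ b tr v Ai := by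
  induction φ with
  | eq t u =>
      intro b tr v Ai hi happ
      obtain ⟨A', h', _, _, hq⟩ := happ 0
      exact hq
  | lt t u =>
      intro b tr v Ai hi happ
      obtain ⟨A', h', _, _, hq⟩ := happ 0
      exact hq
  | mem t i =>
      intro b tr v Ai hi happ
      obtain ⟨A', h', hA, _, hq⟩ := happ (max i (tval v t) + 1)
      show (tval v t ∈ Ai i) ↔ b = true
      rw [← hA i (tval v t) (by omega) (by omega)]
      exact hq
  | not φ ih =>
      intro b tr v Ai hi happ
      exact ih hφ (!b) tr v Ai hi happ
  | and φ ψ ih1 ih2 =>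
      intro b tr v Ai hi happ
      cases b with
      | true =>
          constructor
          · refine ih1 hφ.1 true (extt tr 0) v Ai hi fun n => ?_
            obtain ⟨A', h', hA, hh, hq⟩ := happ n
            exact ⟨A', h', hA, hh, hq.1⟩
          · refine ih2 hφ.2 true (extt tr 1) v Ai hi fun n => ?_
            obtain ⟨A', h', hA, hh, hq⟩ := happ n
            exact ⟨A', h', hA, hh, hq.2⟩
      | false =>
          by_cases hL : ∀ n : ℕ, ∃ (A' : ℕ → Set ℕ) (h' : ℕ → ℕ),
              (∀ i j : ℕ, i < n → j < n → (j ∈ A' i ↔ j ∈ Ai i)) ∧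
              (∀ k, k < n → h' k = hi k) ∧ Q h' φ false (extt tr 0) v A'
          · exact Or.inl (ih1 hφ.1 false (extt tr 0) v Ai hi hL)
          · push_neg at hL
            obtain ⟨n₀, hn₀⟩ := hL
            refine Or.inr (ih2 hφ.2 false (extt tr 1) v Ai hi fun n => ?_)
            obtain ⟨A', h', hA, hh, hq⟩ := happ (max n n₀)
            have hA' : ∀ i j : ℕ, i < n → j < n → (j ∈ A' i ↔ j ∈ Ai i) :=
              fun i j hi' hj => hA i j (by omega) (by omega)
            have hh' : ∀ k, k < n → h' k = hi k := fun k hk => hh k (by omega)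
            rcases hq with hq1 | hq2
            · exact absurd hq1 (hn₀ A' h' (fun i j hi' hj => hA i j (by omega) (by omega))
                (fun k hk => hh k (by omega)))
            · exact ⟨A', h', hA', hh', hq2⟩
  | nall x φ ih =>
      intro b tr v Ai hi happ
      cases b with
      | true =>
          intro a
          refine ih hφ true (extt tr a) (Function.update v x a) Ai hi fun n => ?_
          obtain ⟨A', h', hA, hh, hq⟩ := happ n
          exact ⟨A', h', hA, hh, hq a⟩
      | false =>
          show Q hi φ false (extt tr (hi tr)) (Function.update v x (hi tr)) Ai
          refine ih hφ false (extt tr (hi tr)) (Function.update v x (hi tr)) Ai hi fun n => ?_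
          obtain ⟨A', h', hA, hh, hq⟩ := happ (max n (tr + 1))
          have htr : h' tr = hi tr := hh tr (by omega)
          rw [show Q h' (.nall x φ) false tr v A' =
            Q h' φ false (extt tr (h' tr)) (Function.update v x (h' tr)) A' from rfl, htr] at hq
          exact ⟨A', h', fun i j hi' hj => hA i j (by omega) (by omega),
            fun k hk => hh k (by omega), hq⟩
  | nex x φ ih =>
      intro b tr v Ai hi happ
      cases b with
      | true =>
          show Q hi φ true (extt tr (hi tr)) (Function.update v x (hi tr)) Ai
          refine ih hφ true (extt tr (hi tr)) (Function.update v x (hi tr)) Ai hi fun n => ?_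
          obtain ⟨A', h', hA, hh, hq⟩ := happ (max n (tr + 1))
          have htr : h' tr = hi tr := hh tr (by omega)
          rw [show Q h' (.nex x φ) true tr v A' =
            Q h' φ true (extt tr (h' tr)) (Function.update v x (h' tr)) A' from rfl, htr] at hq
          exact ⟨A', h', fun i j hi' hj => hA i j (by omega) (by omega),
            fun k hk => hh k (by omega), hq⟩
      | false =>
          intro a
          refine ih hφ false (extt tr a) (Function.update v x a) Ai hi fun n => ?_
          obtain ⟨A', h', hA, hh, hq⟩ := happ n
          exact ⟨A', h', hA, hh, hq a⟩
  | ballLt x t φ ih =>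
      intro b tr v Ai hi happ
      cases b with
      | true =>
          intro a ha
          refine ih hφ true (extt tr a) (Function.update v x a) Ai hi fun n => ?_
          obtain ⟨A', h', hA, hh, hq⟩ := happ n
          exact ⟨A', h', hA, hh, hq a ha⟩
      | false =>
          show ∃ a, a < tval v t ∧ Q hi φ false (extt tr a) (Function.update v x a) Ai
          by_contra hcon
          push_neg at hcon
          have bad : ∀ a : ℕ, ∃ m : ℕ, a < tval v t →
              ∀ (A' : ℕ → Set ℕ) (h' : ℕ → ℕ),
                (∀ i j : ℕ, i < m → j < m → (j ∈ A' i ↔ j ∈ Ai i)) →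
                (∀ k, k < m → h' k = hi k) →
                ¬ Q h' φ false (extt tr a) (Function.update v x a) A' := by
            intro a
            by_cases ha : a < tval v t
            · have hnot := hcon a ha
              -- hcon gives ¬Q hi ... meaning the approximation property fails at some level
              by_contra hforall
              push_neg at hforall
              -- hforall : ∀ m, a < tval v t ∧ ∃ A' h', ... ∧ ... ∧ Q h' ...
              refine hcon a ha (ih hφ false (extt tr a) (Function.update v x a) Ai hi ?_)
              intro n
              obtain ⟨-, A', h', hA, hh, hq⟩ := hforall n
              exact ⟨A', h', hA, hh, hq⟩
            · exact ⟨0, fun hc => absurd hc ha⟩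
          choose m hm using bad
          set N := (Finset.range (tval v t)).sup m + 1 with hN
          obtain ⟨A', h', hA, hh, hq⟩ := happ N
          obtain ⟨a, ha, hqa⟩ := hq
          have hmN : m a < N := by
            have : m a ≤ (Finset.range (tval v t)).sup m :=
              Finset.le_sup (Finset.mem_range.mpr ha)
            omega
          exact hm a ha A' h'
            (fun i j hi' hj => hA i j (by omega) (by omega))
            (fun k hk => hh k (by omega)) hqa
  | bexLt x t φ ih =>
      intro b tr v Ai hi happ
      cases b with
      | true =>
          show ∃ a, a < tval v t ∧ Q hi φ true (extt tr a) (Function.update v x a) Ai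
          by_contra hcon
          push_neg at hcon
          have bad : ∀ a : ℕ, ∃ m : ℕ, a < tval v t →
              ∀ (A' : ℕ → Set ℕ) (h' : ℕ → ℕ),
                (∀ i j : ℕ, i < m → j < m → (j ∈ A' i ↔ j ∈ Ai i)) →
                (∀ k, k < m → h' k = hi k) →
                ¬ Q h' φ true (extt tr a) (Function.update v x a) A' := by
            intro a
            by_cases ha : a < tval v t
            · by_contra hforall
              push_neg at hforall
              refine hcon a ha (ih hφ true (extt tr a) (Function.update v x a) Ai hi ?_)
              intro n
              obtain ⟨-, A', h', hA, hh, hq⟩ := hforall n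
              exact ⟨A', h', hA, hh, hq⟩
            · exact ⟨0, fun hc => absurd hc ha⟩
          choose m hm using bad
          set N := (Finset.range (tval v t)).sup m + 1 with hN
          obtain ⟨A', h', hA, hh, hq⟩ := happ N
          obtain ⟨a, ha, hqa⟩ := hq
          have hmN : m a < N := by
            have : m a ≤ (Finset.range (tval v t)).sup m :=
              Finset.le_sup (Finset.mem_range.mpr ha)
            omega
          exact hm a ha A' h'
            (fun i j hi' hj => hA i j (by omega) (by omega))
            (fun k hk => hh k (by omega)) hqa
      | false =>
          intro a ha
          refine ih hφ false (extt tr a) (Function.update v x a) Ai hi fun n => ?_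
          obtain ⟨A', h', hA, hh, hq⟩ := happ n
          exact ⟨A', h', hA, hh, hq a ha⟩
  | sall X φ ih =>
      intro b tr v Ai hi happ
      obtain ⟨A', h', _, _, hq⟩ := happ 0
      exact hq
  | sex X φ ih =>
      intro b tr v Ai hi happ
      obtain ⟨A', h', _, _, hq⟩ := happ 0
      exact hq

end
end SOA

namespace SOA
open Classical

noncomputable section

@[simp] lemma tval_var {v : ℕ → ℕ} {n : ℕ} : tval v (.var n) = v n := rfl
@[simp] lemma tval_succ {v : ℕ → ℕ} {t : Term} : tval v (.succ t) = tval v t + 1 := rfl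

/-- `t` does not mention variable `y`. -/
def Term.avoids : Term → ℕ → Prop
  | .var n, y => n ≠ y
  | .zero, _ => True
  | .succ t, y => t.avoids y
  | .add t u, y => t.avoids y ∧ u.avoids y
  | .mul t u, y => t.avoids y ∧ u.avoids y

lemma tval_update_avoid {t : Term} {y : ℕ} (h : t.avoids y) :
    ∀ (v : ℕ → ℕ) (a : ℕ), tval (Function.update v y a) t = tval v t := by
  induction t with
  | var n => intro v a; exact Function.update_of_ne h _ _
  | zero => intro v a; rfl
  | succ t ih => intro v a; simp [tval, ih h]
  | add t u iht ihu => intro v a; simp [tval, iht h.1, ihu h.2]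
  | mul t u iht ihu => intro v a; simp [tval, iht h.1, ihu h.2]

lemma numeral_avoids (c y : ℕ) : (numeral c).avoids y := by
  induction c with
  | zero => trivial
  | succ c ih => exact ih

lemma ev_avoids_odd {t : Term} (ht : t.Ev) {y : ℕ} (hy : y % 2 = 1) : t.avoids y := by
  induction t with
  | var n => intro h; subst h; rw [ht] at hy; cases hy
  | zero => trivial
  | succ t ih => exact ih ht
  | add t u iht ihu => exact ⟨iht ht.1, ihu ht.2⟩
  | mul t u iht ihu => exact ⟨iht ht.1, ihu ht.2⟩

lemma tval_congr {t : Term} (ht : t.Ev) {v w : ℕ → ℕ}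
    (h : ∀ x, x % 2 = 0 → v x = w x) : tval v t = tval w t := by
  induction t with
  | var n => exact h n ht
  | zero => rfl
  | succ t ih => simp [tval, ih ht]
  | add t u iht ihu => simp [tval, iht ht.1, ihu ht.2]
  | mul t u iht ihu => simp [tval, iht ht.1, ihu ht.2]

def flipT (p : ℕ) : ℕ := 4 - p

/-- `pair 1 (pair t u) ∈ A 1`. -/
def HmemF (t u : Term) : Fml :=
  .nex 5 ((pairF t u (.var 5)).and
    (.nex 7 ((pairF (numeral 1) (.var 5) (.var 7)).and (.mem (.var 7) 1))))

/-- `pair 0 t ∈ A 1`. -/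
def WmemF (t : Term) : Fml :=
  .nex 5 ((pairF (numeral 0) t (.var 5)).and (.mem (.var 5) 1))

/-- Bind the new trace `extt (v p) (tval v u)` to variable `flipT p` and continue. -/
def stepAllF (u : Term) (p : ℕ) (body : Fml) : Fml :=
  .nall (flipT p) (Fml.impF
    (.nex 5 ((pairF (.var p) u (.var 5)).and (.eq (.var (flipT p)) (.succ (.var 5)))))
    body)

/-- Skolem binder: `x := h (v p)`, new trace, continue. -/
def skolF (x p : ℕ) (body : Fml) : Fml :=
  .nex x ((HmemF (.var p) (.var x)).and (stepAllF (.var x) p body))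

lemma arith_HmemF {t u} : (HmemF t u).arithmetical :=
  ⟨arith_pairF, arith_pairF, trivial⟩

lemma arith_WmemF {t} : (WmemF t).arithmetical := ⟨arith_pairF, trivial⟩

lemma arith_stepAllF {u p body} (hb : body.arithmetical) : (stepAllF u p body).arithmetical :=
  ⟨⟨arith_pairF, trivial⟩, hb⟩

lemma arith_skolF {x p body} (hb : body.arithmetical) : (skolF x p body).arithmetical :=
  ⟨arith_HmemF, arith_stepAllF hb⟩

lemma Sat_HmemF {v : ℕ → ℕ} {A : ℕ → Set ℕ} {t u : Term}
    (ht5 : t.avoids 5) (ht7 : t.avoids 7) (hu5 : u.avoids 5) (hu7 : u.avoids 7) :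
    Sat stdU v A (HmemF t u) ↔ Nat.pair 1 (Nat.pair (tval v t) (tval v u)) ∈ A 1 := by
  rw [HmemF, Sat_nex']
  constructor
  · rintro ⟨d, hd⟩
    obtain ⟨h1, h2⟩ := Sat_and'.mp hd
    simp only [Sat_pairF, tval_var, Function.update_self, tval_update_avoid ht5,
      tval_update_avoid hu5] at h1
    rw [Sat_nex'] at h2
    obtain ⟨c, hc⟩ := h2
    obtain ⟨h3, h4⟩ := Sat_and'.mp hc
    simp only [Sat_pairF, tval_var, tval_numeral, Function.update_self,
      Function.update_of_ne (show (5:ℕ) ≠ 7 by omega)] at h3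
    simp only [Sat_mem', tval_var, Function.update_self] at h4
    rw [← h3, ← h1] at h4
    exact h4
  · intro hmem
    refine ⟨Nat.pair (tval v t) (tval v u), Sat_and'.mpr ⟨?_, ?_⟩⟩
    · simp only [Sat_pairF, tval_var, Function.update_self, tval_update_avoid ht5,
        tval_update_avoid hu5]
    · rw [Sat_nex']
      refine ⟨Nat.pair 1 (Nat.pair (tval v t) (tval v u)), Sat_and'.mpr ⟨?_, ?_⟩⟩
      · simp only [Sat_pairF, tval_var, tval_numeral, Function.update_self,
          Function.update_of_ne (show (5:ℕ) ≠ 7 by omega)]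
      · simp only [Sat_mem', tval_var, Function.update_self]
        exact hmem

lemma Sat_WmemF {v : ℕ → ℕ} {A : ℕ → Set ℕ} {t : Term} (ht5 : t.avoids 5) :
    Sat stdU v A (WmemF t) ↔ Nat.pair 0 (tval v t) ∈ A 1 := by
  rw [WmemF, Sat_nex']
  constructor
  · rintro ⟨d, hd⟩
    obtain ⟨h1, h2⟩ := Sat_and'.mp hd
    simp only [Sat_pairF, tval_var, Function.update_self, tval_numeral,
      tval_update_avoid ht5] at h1
    simp only [Sat_mem', tval_var, Function.update_self] at h2
    rw [← h1] at h2
    exact h2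
  · intro hmem
    refine ⟨Nat.pair 0 (tval v t), Sat_and'.mpr ⟨?_, ?_⟩⟩
    · simp only [Sat_pairF, tval_var, Function.update_self, tval_numeral,
        tval_update_avoid ht5]
    · simp only [Sat_mem', tval_var, Function.update_self]
      exact hmem

lemma Sat_stepAllF {v : ℕ → ℕ} {A : ℕ → Set ℕ} {u : Term} {p : ℕ} {body : Fml}
    (hp : p = 1 ∨ p = 3) (hu5 : u.avoids 5) (hup : u.avoids (flipT p)) :
    Sat stdU v A (stepAllF u p body) ↔
      Sat stdU (Function.update v (flipT p) (extt (v p) (tval v u))) A body := by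
  have hpp : p ≠ flipT p := by rcases hp with rfl | rfl <;> simp [flipT]
  have h5p : (5:ℕ) ≠ flipT p := by rcases hp with rfl | rfl <;> simp [flipT]
  have hp5 : p ≠ 5 := by rcases hp with rfl | rfl <;> omega
  rw [stepAllF, Sat_nall']
  have guard : ∀ t' : ℕ,
      Sat stdU (Function.update v (flipT p) t') A
        (.nex 5 ((pairF (.var p) u (.var 5)).and (.eq (.var (flipT p)) (.succ (.var 5)))))
      ↔ t' = extt (v p) (tval v u) := by
    intro t'
    rw [Sat_nex']
    constructor
    · rintro ⟨d, hd⟩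
      obtain ⟨h1, h2⟩ := Sat_and'.mp hd
      simp only [Sat_pairF, tval_var, Function.update_self, tval_update_avoid hu5,
        tval_update_avoid hup, Function.update_of_ne hp5, Function.update_of_ne hpp] at h1
      simp only [Sat_eq', tval_var, tval_succ, Function.update_self,
        Function.update_of_ne h5p.symm] at h2
      rw [h2, ← h1]
      rfl
    · intro ht'
      refine ⟨Nat.pair (v p) (tval v u), Sat_and'.mpr ⟨?_, ?_⟩⟩
      · simp only [Sat_pairF, tval_var, Function.update_self, tval_update_avoid hu5,
          tval_update_avoid hup, Function.update_of_ne hp5, Function.update_of_ne hpp]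
      · simp only [Sat_eq', tval_var, tval_succ, Function.update_self,
          Function.update_of_ne h5p.symm]
        rw [ht']
        rfl
  constructor
  · intro hall
    exact Sat_impF.mp (hall _) ((guard _).mpr rfl)
  · intro hb t'
    refine Sat_impF.mpr fun hg => ?_
    rw [(guard t').mp hg]
    exact hb

lemma Sat_skolF {v : ℕ → ℕ} {A : ℕ → Set ℕ} {x p : ℕ} {body : Fml} {h : ℕ → ℕ}
    (hp : p = 1 ∨ p = 3) (hx : x % 2 = 0)
    (hpack : ∀ k y, (Nat.pair 1 (Nat.pair k y) ∈ A 1) ↔ h k = y) :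
    Sat stdU v A (skolF x p body) ↔
      Sat stdU (Function.update (Function.update v x (h (v p))) (flipT p)
        (extt (v p) (h (v p)))) A body := by
  have hxp : x ≠ p := by rcases hp with rfl | rfl <;> omega
  have hx5 : x ≠ 5 := by omega
  have hx7 : x ≠ 7 := by omega
  have hxfp : x ≠ flipT p := by rcases hp with rfl | rfl <;> simp [flipT] <;> omega
  have hp5 : p ≠ 5 := by rcases hp with rfl | rfl <;> omega
  have hp7 : p ≠ 7 := by rcases hp with rfl | rfl <;> omega
  rw [skolF, Sat_nex']
  constructor
  · rintro ⟨a, ha⟩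
    obtain ⟨h1, h2⟩ := Sat_and'.mp ha
    rw [Sat_HmemF (t := .var p) (u := .var x) hp5 hp7 hx5 hx7] at h1
    simp only [tval_var, Function.update_self, Function.update_of_ne hxp.symm] at h1
    rw [hpack] at h1
    rw [Sat_stepAllF hp (u := .var x) hx5 hxfp] at h2
    simp only [tval_var, Function.update_self, Function.update_of_ne hxp.symm] at h2
    rw [h1]
    exact h2
  · intro hb
    refine ⟨h (v p), Sat_and'.mpr ⟨?_, ?_⟩⟩
    · rw [Sat_HmemF (t := .var p) (u := .var x) hp5 hp7 hx5 hx7]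
      simp only [tval_var, Function.update_self, Function.update_of_ne hxp.symm]
      rw [hpack]
    · rw [Sat_stepAllF hp (u := .var x) hx5 hxfp]
      simp only [tval_var, Function.update_self, Function.update_of_ne hxp.symm]
      exact hb

end
end SOA

namespace SOA
open Classical

noncomputable section

/-- Skolemizing translation: `TransF Xv φ b p` with trace variable `p ∈ {1,3}`. -/
def TransF (Xv : ℕ) : Fml → Bool → ℕ → Fml
  | .eq t u, b, _ => cond b (.eq t u) (.not (.eq t u))
  | .lt t u, b, _ => cond b (.lt t u) (.not (.lt t u))
  | .mem t i, b, _ =>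
      if i = Xv then cond b (WmemF t) (.not (WmemF t))
      else cond b (.mem t i) (.not (.mem t i))
  | .not φ, b, p => TransF Xv φ (!b) p
  | .and φ ψ, b, p =>
      cond b (.and (stepAllF (numeral 0) p (TransF Xv φ true (flipT p)))
                   (stepAllF (numeral 1) p (TransF Xv ψ true (flipT p))))
             (Fml.orF (stepAllF (numeral 0) p (TransF Xv φ false (flipT p)))
                      (stepAllF (numeral 1) p (TransF Xv ψ false (flipT p))))
  | .nall x φ, b, p =>
      cond b (.nall x (stepAllF (.var x) p (TransF Xv φ true (flipT p))))
             (skolF x p (TransF Xv φ false (flipT p)))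
  | .nex x φ, b, p =>
      cond b (skolF x p (TransF Xv φ true (flipT p)))
             (.nall x (stepAllF (.var x) p (TransF Xv φ false (flipT p))))
  | .ballLt x t φ, b, p =>
      cond b (.ballLt x t (stepAllF (.var x) p (TransF Xv φ true (flipT p))))
             (.bexLt x t (stepAllF (.var x) p (TransF Xv φ false (flipT p))))
  | .bexLt x t φ, b, p =>
      cond b (.bexLt x t (stepAllF (.var x) p (TransF Xv φ true (flipT p))))
             (.ballLt x t (stepAllF (.var x) p (TransF Xv φ false (flipT p))))
  | .sall _ _, _, _ => .eq .zero .zero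
  | .sex _ _, _, _ => .eq .zero .zero

lemma arith_TransF (Xv : ℕ) (φ : Fml) : ∀ (b : Bool) (p : ℕ), (TransF Xv φ b p).arithmetical := by
  induction φ with
  | eq t u => intro b p; cases b <;> trivial
  | lt t u => intro b p; cases b <;> trivial
  | mem t i =>
      intro b p
      by_cases hi : i = Xv
      · have hT : ∀ b' : Bool, TransF Xv (.mem t i) b' p = cond b' (WmemF t) (.not (WmemF t)) := by
          intro b'; simp [TransF, hi]
        rw [hT]
        cases b
        · exact (arith_WmemF : (WmemF t).arithmetical)
        · exact (arith_WmemF : (WmemF t).arithmetical)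
      · have hT : ∀ b' : Bool, TransF Xv (.mem t i) b' p = cond b' (.mem t i) (.not (.mem t i)) := by
          intro b'; simp [TransF, hi]
        rw [hT]
        cases b <;> trivial
  | not φ ih => intro b p; exact ih (!b) p
  | and φ ψ ih1 ih2 =>
      intro b p
      cases b
      · exact arith_orF (arith_stepAllF (ih1 false (flipT p))) (arith_stepAllF (ih2 false (flipT p)))
      · exact ⟨arith_stepAllF (ih1 true (flipT p)), arith_stepAllF (ih2 true (flipT p))⟩
  | nall x φ ih =>
      intro b p
      cases b
      · exact arith_skolF (ih false (flipT p))
      · exact arith_stepAllF (ih true (flipT p))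
  | nex x φ ih =>
      intro b p
      cases b
      · exact arith_stepAllF (ih false (flipT p))
      · exact arith_skolF (ih true (flipT p))
  | ballLt x t φ ih =>
      intro b p
      cases b
      · exact arith_stepAllF (ih false (flipT p))
      · exact arith_stepAllF (ih true (flipT p))
  | bexLt x t φ ih =>
      intro b p
      cases b
      · exact arith_stepAllF (ih false (flipT p))
      · exact arith_stepAllF (ih true (flipT p))
  | sall X φ ih => intro b p; trivial
  | sex X φ ih => intro b p; trivial

lemma Sat_TransF {Xv : ℕ} {φ : Fml} (hφ : φ.arithmetical) :
    ∀ (b : Bool) (p : ℕ), (p = 1 ∨ p = 3) → φ.Ev →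
    ∀ (v₁ v₂ : ℕ → ℕ), (∀ x, x % 2 = 0 → v₁ x = v₂ x) →
    ∀ (A₁ A : ℕ → Set ℕ), (∀ i, i ≠ 1 → i ≠ Xv → A₁ i = A i) →
    ∀ (h : ℕ → ℕ), (∀ k y, (Nat.pair 1 (Nat.pair k y) ∈ A₁ 1) ↔ h k = y) →
    (∀ m, (Nat.pair 0 m ∈ A₁ 1) ↔ m ∈ A Xv) →
    (Sat stdU v₁ A₁ (TransF Xv φ b p) ↔ Q h φ b (v₁ p) v₂ A) := by
  induction φ with
  | eq t u =>
      intro b p hp hEv v₁ v₂ hv A₁ A hA h hpack hpackW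
      cases b
      · show Sat stdU v₁ A₁ (.not (.eq t u)) ↔ _
        rw [Sat_not', Sat_eq', tval_congr hEv.1 hv, tval_congr hEv.2 hv]
        show _ ↔ ((tval v₂ t = tval v₂ u) ↔ false = true)
        simp
      · show Sat stdU v₁ A₁ (.eq t u) ↔ _
        rw [Sat_eq', tval_congr hEv.1 hv, tval_congr hEv.2 hv]
        show _ ↔ ((tval v₂ t = tval v₂ u) ↔ true = true)
        simp
  | lt t u =>
      intro b p hp hEv v₁ v₂ hv A₁ A hA h hpack hpackW
      cases b
      · show Sat stdU v₁ A₁ (.not (.lt t u)) ↔ _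
        rw [Sat_not', Sat_lt', tval_congr hEv.1 hv, tval_congr hEv.2 hv]
        show _ ↔ ((tval v₂ t < tval v₂ u) ↔ false = true)
        simp
      · show Sat stdU v₁ A₁ (.lt t u) ↔ _
        rw [Sat_lt', tval_congr hEv.1 hv, tval_congr hEv.2 hv]
        show _ ↔ ((tval v₂ t < tval v₂ u) ↔ true = true)
        simp
  | mem t i =>
      intro b p hp hEv v₁ v₂ hv A₁ A hA h hpack hpackW
      have ht5 : t.avoids 5 := ev_avoids_odd hEv.1 (by omega)
      have hie : i % 2 = 0 := hEv.2
      by_cases hi : i = Xv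
      · have hT : ∀ b' : Bool, TransF Xv (.mem t i) b' p = cond b' (WmemF t) (.not (WmemF t)) := by
          intro b'; simp [TransF, hi]
        rw [hT]
        cases b
        · show Sat stdU v₁ A₁ (.not (WmemF t)) ↔ _
          rw [Sat_not', Sat_WmemF ht5, hpackW, tval_congr hEv.1 hv, ← hi]
          show _ ↔ ((tval v₂ t ∈ A i) ↔ false = true)
          simp
        · show Sat stdU v₁ A₁ (WmemF t) ↔ _
          rw [Sat_WmemF ht5, hpackW, tval_congr hEv.1 hv, ← hi]
          show _ ↔ ((tval v₂ t ∈ A i) ↔ true = true)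
          simp
      · have hT : ∀ b' : Bool, TransF Xv (.mem t i) b' p = cond b' (.mem t i) (.not (.mem t i)) := by
          intro b'; simp [TransF, hi]
        rw [hT]
        have hA' : A₁ i = A i := hA i (by omega) hi
        cases b
        · show Sat stdU v₁ A₁ (.not (.mem t i)) ↔ _
          rw [Sat_not', Sat_mem', hA', tval_congr hEv.1 hv]
          show _ ↔ ((tval v₂ t ∈ A i) ↔ false = true)
          simp
        · show Sat stdU v₁ A₁ (.mem t i) ↔ _
          rw [Sat_mem', hA', tval_congr hEv.1 hv]
          show _ ↔ ((tval v₂ t ∈ A i) ↔ true = true)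
          simp
  | not φ ih =>
      intro b p hp hEv v₁ v₂ hv A₁ A hA h hpack hpackW
      exact ih hφ (!b) p hp hEv v₁ v₂ hv A₁ A hA h hpack hpackW
  | and φ ψ ih1 ih2 =>
      intro b p hp hEv v₁ v₂ hv A₁ A hA h hpack hpackW
      have hp' : flipT p = 1 ∨ flipT p = 3 := by rcases hp with rfl | rfl <;> simp [flipT]
      have hfodd : (flipT p) % 2 = 1 := by rcases hp' with h' | h' <;> rw [h']
      have step : ∀ (c : ℕ) (body : Fml) (bb : Bool) (χ : Fml), χ.arithmetical → χ.Ev →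
          body = TransF Xv χ bb (flipT p) →
          (χ.arithmetical → ∀ (b : Bool) (p : ℕ), (p = 1 ∨ p = 3) → χ.Ev →
            ∀ (v₁ v₂ : ℕ → ℕ), (∀ x, x % 2 = 0 → v₁ x = v₂ x) →
            ∀ (A₁ A : ℕ → Set ℕ), (∀ i, i ≠ 1 → i ≠ Xv → A₁ i = A i) →
            ∀ (h : ℕ → ℕ), (∀ k y, (Nat.pair 1 (Nat.pair k y) ∈ A₁ 1) ↔ h k = y) →
            (∀ m, (Nat.pair 0 m ∈ A₁ 1) ↔ m ∈ A Xv) →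
            (Sat stdU v₁ A₁ (TransF Xv χ b p) ↔ Q h χ b (v₁ p) v₂ A)) →
          (Sat stdU v₁ A₁ (stepAllF (numeral c) p body) ↔
            Q h χ bb (extt (v₁ p) c) v₂ A) := by
        intro c body bb χ hχ hχEv hbody ihχ
        rw [Sat_stepAllF hp (numeral_avoids _ _) (numeral_avoids _ _), tval_numeral, hbody]
        have hv' : ∀ x, x % 2 = 0 → Function.update v₁ (flipT p) (extt (v₁ p) c) x = v₂ x := by
          intro x hx
          rw [Function.update_of_ne (by omega)]
          exact hv x hx
        have := ihχ hχ bb (flipT p) hp' hχEv _ v₂ hv' A₁ A hA h hpack hpackW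
        rwa [Function.update_self] at this
      cases b
      · show Sat stdU v₁ A₁ (Fml.orF _ _) ↔ _
        rw [Sat_orF]
        show _ ↔ (Q h φ false (extt (v₁ p) 0) v₂ A ∨ Q h ψ false (extt (v₁ p) 1) v₂ A)
        exact or_congr (step 0 _ false φ hφ.1 hEv.1 rfl ih1) (step 1 _ false ψ hφ.2 hEv.2 rfl ih2)
      · show Sat stdU v₁ A₁ (.and _ _) ↔ _
        rw [Sat_and']
        show _ ↔ (Q h φ true (extt (v₁ p) 0) v₂ A ∧ Q h ψ true (extt (v₁ p) 1) v₂ A)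
        exact and_congr (step 0 _ true φ hφ.1 hEv.1 rfl ih1) (step 1 _ true ψ hφ.2 hEv.2 rfl ih2)
  | nall x φ ih =>
      intro b p hp hEv v₁ v₂ hv A₁ A hA h hpack hpackW
      have hφ' : φ.arithmetical := hφ
      have hp' : flipT p = 1 ∨ flipT p = 3 := by rcases hp with rfl | rfl <;> simp [flipT]
      have hx : x % 2 = 0 := hEv.1
      have hpx : p ≠ x := by rcases hp with rfl | rfl <;> omega
      have hx5 : x ≠ 5 := by omega
      have hxfp : x ≠ flipT p := by rcases hp' with h' | h' <;> omega
      cases b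
      · show Sat stdU v₁ A₁ (skolF x p (TransF Xv φ false (flipT p))) ↔ _
        rw [Sat_skolF hp hx hpack]
        show _ ↔ Q h φ false (extt (v₁ p) (h (v₁ p))) (Function.update v₂ x (h (v₁ p))) A
        have hv' : ∀ y, y % 2 = 0 →
            Function.update (Function.update v₁ x (h (v₁ p))) (flipT p)
              (extt (v₁ p) (h (v₁ p))) y = Function.update v₂ x (h (v₁ p)) y := by
          intro y hy
          rw [Function.update_of_ne (by omega)]
          by_cases hyx : y = x
          · subst hyx; rw [Function.update_self, Function.update_self]
          · rw [Function.update_of_ne hyx, Function.update_of_ne hyx]; exact hv y hy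
        have := ih hφ' false (flipT p) hp' hEv.2 _ _ hv' A₁ A hA h hpack hpackW
        rwa [Function.update_self] at this
      · show Sat stdU v₁ A₁ (.nall x (stepAllF (.var x) p (TransF Xv φ true (flipT p)))) ↔ _
        rw [Sat_nall']
        show _ ↔ ∀ a, Q h φ true (extt (v₁ p) a) (Function.update v₂ x a) A
        refine forall_congr' fun a => ?_
        rw [Sat_stepAllF hp (show (Term.var x).avoids 5 from hx5)
          (show (Term.var x).avoids (flipT p) from hxfp), tval_var, Function.update_self,
          Function.update_of_ne hpx]
        have hv' : ∀ y, y % 2 = 0 →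
            Function.update (Function.update v₁ x a) (flipT p) (extt (v₁ p) a) y =
              Function.update v₂ x a y := by
          intro y hy
          rw [Function.update_of_ne (by omega)]
          by_cases hyx : y = x
          · subst hyx; rw [Function.update_self, Function.update_self]
          · rw [Function.update_of_ne hyx, Function.update_of_ne hyx]; exact hv y hy
        have := ih hφ' true (flipT p) hp' hEv.2 _ _ hv' A₁ A hA h hpack hpackW
        rwa [Function.update_self] at this
  | nex x φ ih =>
      intro b p hp hEv v₁ v₂ hv A₁ A hA h hpack hpackW
      have hφ' : φ.arithmetical := hφ
      have hp' : flipT p = 1 ∨ flipT p = 3 := by rcases hp with rfl | rfl <;> simp [flipT]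
      have hx : x % 2 = 0 := hEv.1
      have hpx : p ≠ x := by rcases hp with rfl | rfl <;> omega
      have hx5 : x ≠ 5 := by omega
      have hxfp : x ≠ flipT p := by rcases hp' with h' | h' <;> omega
      cases b
      · show Sat stdU v₁ A₁ (.nall x (stepAllF (.var x) p (TransF Xv φ false (flipT p)))) ↔ _
        rw [Sat_nall']
        show _ ↔ ∀ a, Q h φ false (extt (v₁ p) a) (Function.update v₂ x a) A
        refine forall_congr' fun a => ?_
        rw [Sat_stepAllF hp (show (Term.var x).avoids 5 from hx5)
          (show (Term.var x).avoids (flipT p) from hxfp), tval_var, Function.update_self,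
          Function.update_of_ne hpx]
        have hv' : ∀ y, y % 2 = 0 →
            Function.update (Function.update v₁ x a) (flipT p) (extt (v₁ p) a) y =
              Function.update v₂ x a y := by
          intro y hy
          rw [Function.update_of_ne (by omega)]
          by_cases hyx : y = x
          · subst hyx; rw [Function.update_self, Function.update_self]
          · rw [Function.update_of_ne hyx, Function.update_of_ne hyx]; exact hv y hy
        have := ih hφ' false (flipT p) hp' hEv.2 _ _ hv' A₁ A hA h hpack hpackW
        rwa [Function.update_self] at this
      · show Sat stdU v₁ A₁ (skolF x p (TransF Xv φ true (flipT p))) ↔ _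
        rw [Sat_skolF hp hx hpack]
        show _ ↔ Q h φ true (extt (v₁ p) (h (v₁ p))) (Function.update v₂ x (h (v₁ p))) A
        have hv' : ∀ y, y % 2 = 0 →
            Function.update (Function.update v₁ x (h (v₁ p))) (flipT p)
              (extt (v₁ p) (h (v₁ p))) y = Function.update v₂ x (h (v₁ p)) y := by
          intro y hy
          rw [Function.update_of_ne (by omega)]
          by_cases hyx : y = x
          · subst hyx; rw [Function.update_self, Function.update_self]
          · rw [Function.update_of_ne hyx, Function.update_of_ne hyx]; exact hv y hy
        have := ih hφ' true (flipT p) hp' hEv.2 _ _ hv' A₁ A hA h hpack hpackW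
        rwa [Function.update_self] at this
  | ballLt x t φ ih =>
      intro b p hp hEv v₁ v₂ hv A₁ A hA h hpack hpackW
      have hφ' : φ.arithmetical := hφ
      have hp' : flipT p = 1 ∨ flipT p = 3 := by rcases hp with rfl | rfl <;> simp [flipT]
      have hx : x % 2 = 0 := hEv.1
      have hpx : p ≠ x := by rcases hp with rfl | rfl <;> omega
      have hx5 : x ≠ 5 := by omega
      have hxfp : x ≠ flipT p := by rcases hp' with h' | h' <;> omega
      have hbd : tval v₁ t = tval v₂ t := tval_congr hEv.2.1 hv
      have inner : ∀ a : ℕ,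
          (Sat stdU (Function.update v₁ x a) A₁ (stepAllF (.var x) p (TransF Xv φ b (flipT p))) ↔
            Q h φ b (extt (v₁ p) a) (Function.update v₂ x a) A) := by
        intro a
        rw [Sat_stepAllF hp (show (Term.var x).avoids 5 from hx5)
          (show (Term.var x).avoids (flipT p) from hxfp), tval_var, Function.update_self,
          Function.update_of_ne hpx]
        have hv' : ∀ y, y % 2 = 0 →
            Function.update (Function.update v₁ x a) (flipT p) (extt (v₁ p) a) y =
              Function.update v₂ x a y := by
          intro y hy
          rw [Function.update_of_ne (by omega)]
          by_cases hyx : y = x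
          · subst hyx; rw [Function.update_self, Function.update_self]
          · rw [Function.update_of_ne hyx, Function.update_of_ne hyx]; exact hv y hy
        have := ih hφ' b (flipT p) hp' hEv.2.2 _ _ hv' A₁ A hA h hpack hpackW
        rwa [Function.update_self] at this
      cases b
      · show Sat stdU v₁ A₁ (.bexLt x t _) ↔ _
        rw [Sat_bexLt']
        show _ ↔ ∃ a, a < tval v₂ t ∧ Q h φ false (extt (v₁ p) a) (Function.update v₂ x a) A
        rw [← hbd]
        exact exists_congr fun a => and_congr Iff.rfl (inner a)
      · show Sat stdU v₁ A₁ (.ballLt x t _) ↔ _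
        rw [Sat_ballLt']
        show _ ↔ ∀ a, a < tval v₂ t → Q h φ true (extt (v₁ p) a) (Function.update v₂ x a) A
        rw [← hbd]
        exact forall_congr' fun a => imp_congr Iff.rfl (inner a)
  | bexLt x t φ ih =>
      intro b p hp hEv v₁ v₂ hv A₁ A hA h hpack hpackW
      have hφ' : φ.arithmetical := hφ
      have hp' : flipT p = 1 ∨ flipT p = 3 := by rcases hp with rfl | rfl <;> simp [flipT]
      have hx : x % 2 = 0 := hEv.1
      have hpx : p ≠ x := by rcases hp with rfl | rfl <;> omega
      have hx5 : x ≠ 5 := by omega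
      have hxfp : x ≠ flipT p := by rcases hp' with h' | h' <;> omega
      have hbd : tval v₁ t = tval v₂ t := tval_congr hEv.2.1 hv
      have inner : ∀ a : ℕ,
          (Sat stdU (Function.update v₁ x a) A₁ (stepAllF (.var x) p (TransF Xv φ b (flipT p))) ↔
            Q h φ b (extt (v₁ p) a) (Function.update v₂ x a) A) := by
        intro a
        rw [Sat_stepAllF hp (show (Term.var x).avoids 5 from hx5)
          (show (Term.var x).avoids (flipT p) from hxfp), tval_var, Function.update_self,
          Function.update_of_ne hpx]
        have hv' : ∀ y, y % 2 = 0 →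
            Function.update (Function.update v₁ x a) (flipT p) (extt (v₁ p) a) y =
              Function.update v₂ x a y := by
          intro y hy
          rw [Function.update_of_ne (by omega)]
          by_cases hyx : y = x
          · subst hyx; rw [Function.update_self, Function.update_self]
          · rw [Function.update_of_ne hyx, Function.update_of_ne hyx]; exact hv y hy
        have := ih hφ' b (flipT p) hp' hEv.2.2 _ _ hv' A₁ A hA h hpack hpackW
        rwa [Function.update_self] at this
      cases b
      · show Sat stdU v₁ A₁ (.ballLt x t _) ↔ _
        rw [Sat_ballLt']
        show _ ↔ ∀ a, a < tval v₂ t → Q h φ false (extt (v₁ p) a) (Function.update v₂ x a) A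
        rw [← hbd]
        exact forall_congr' fun a => imp_congr Iff.rfl (inner a)
      · show Sat stdU v₁ A₁ (.bexLt x t _) ↔ _
        rw [Sat_bexLt']
        show _ ↔ ∃ a, a < tval v₂ t ∧ Q h φ true (extt (v₁ p) a) (Function.update v₂ x a) A
        rw [← hbd]
        exact exists_congr fun a => and_congr Iff.rfl (inner a)
  | sall X φ ih =>
      intro b p hp hEv v₁ v₂ hv A₁ A hA h hpack hpackW
      exact hEv.elim
  | sex X φ ih =>
      intro b p hp hEv v₁ v₂ hv A₁ A hA h hpack hpackW
      exact hEv.elim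

end
end SOA

namespace SOA
open Classical

noncomputable section

def stemAtom (i a : ℕ) : Fml :=
  (Fml.mem (numeral (Nat.pair 1 (Nat.pair i (Nat.unpair a).1))) 1).and
    (if (Nat.unpair a).2 = 0 then Fml.mem (numeral (Nat.pair 0 i)) 1
     else .not (Fml.mem (numeral (Nat.pair 0 i)) 1))

lemma arith_stemAtom {i a : ℕ} : (stemAtom i a).arithmetical := by
  unfold stemAtom
  split <;> exact ⟨trivial, trivial⟩

lemma Sat_stemAtom {v : ℕ → ℕ} {A : ℕ → Set ℕ} {i a : ℕ} :
    Sat stdU v A (stemAtom i a) ↔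
      (Nat.pair 1 (Nat.pair i (Nat.unpair a).1) ∈ A 1 ∧
        ((Nat.unpair a).2 = 0 ↔ Nat.pair 0 i ∈ A 1)) := by
  unfold stemAtom
  rw [Sat_and', Sat_mem', tval_numeral]
  refine and_congr Iff.rfl ?_
  split_ifs with h0
  · rw [Sat_mem', tval_numeral]
    simp [h0]
  · rw [Sat_not', Sat_mem', tval_numeral]
    constructor
    · intro hn
      exact ⟨fun h' => absurd h' h0, fun hm => absurd hm hn⟩
    · intro hiff hm
      exact h0 (hiff.mpr hm)

def stemF : ℕ → List ℕ → Fml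
  | _, [] => .eq .zero .zero
  | i, a :: s => (stemAtom i a).and (stemF (i+1) s)

lemma arith_stemF (s : List ℕ) : ∀ i, (stemF i s).arithmetical := by
  induction s with
  | nil => intro i; trivial
  | cons a s ih => intro i; exact ⟨arith_stemAtom, ih (i+1)⟩

lemma Sat_stemF {v : ℕ → ℕ} {A : ℕ → Set ℕ} :
    ∀ (s : List ℕ) (i : ℕ),
      Sat stdU v A (stemF i s) ↔
        ∀ j, j < s.length →
          (Nat.pair 1 (Nat.pair (i+j) (Nat.unpair (s.getD j 0)).1) ∈ A 1 ∧
            ((Nat.unpair (s.getD j 0)).2 = 0 ↔ Nat.pair 0 (i+j) ∈ A 1)) := by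
  intro s
  induction s with
  | nil =>
      intro i
      show Sat stdU v A (.eq .zero .zero) ↔ _
      rw [Sat_eq']
      refine iff_of_true rfl fun j hj => absurd hj (by simp)
  | cons a s ih =>
      intro i
      show Sat stdU v A ((stemAtom i a).and (stemF (i+1) s)) ↔ _
      rw [Sat_and', Sat_stemAtom, ih (i+1)]
      constructor
      · rintro ⟨h0, hs⟩ j hj
        cases j with
        | zero =>
            rw [List.getD_cons_zero, Nat.add_zero]
            exact h0
        | succ j =>
            rw [List.getD_cons_succ, show i + (j+1) = (i+1)+j by omega]
            exact hs j (by simp only [List.length_cons] at hj; omega)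
      · intro hall
        refine ⟨?_, fun j hj => ?_⟩
        · have := hall 0 (by simp only [List.length_cons]; omega)
          rw [List.getD_cons_zero, Nat.add_zero] at this
          exact this
        · have := hall (j+1) (by simp only [List.length_cons] at hj ⊢; omega)
          rw [List.getD_cons_succ, show i + (j+1) = (i+1)+j by omega] at this
          exact this

def totF : Fml :=
  .nall 0 ((Fml.nex 2 (HmemF (.var 0) (.var 2))).and
    (.nall 2 (.nall 4 (Fml.impF ((HmemF (.var 0) (.var 2)).and (HmemF (.var 0) (.var 4)))
      (.eq (.var 2) (.var 4))))))

lemma arith_totF : totF.arithmetical :=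
  ⟨arith_HmemF, ⟨arith_HmemF, arith_HmemF⟩, trivial⟩

lemma Sat_totF {v : ℕ → ℕ} {A : ℕ → Set ℕ} :
    Sat stdU v A totF ↔
      ∀ k : ℕ, (∃ y, Nat.pair 1 (Nat.pair k y) ∈ A 1) ∧
        (∀ y y', Nat.pair 1 (Nat.pair k y) ∈ A 1 → Nat.pair 1 (Nat.pair k y') ∈ A 1 → y = y') := by
  rw [totF, Sat_nall']
  refine forall_congr' fun k => ?_
  rw [Sat_and']
  refine and_congr ?_ ?_
  · rw [Sat_nex']
    refine exists_congr fun y => ?_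
    rw [Sat_HmemF (t := .var 0) (u := .var 2) (show (0:ℕ) ≠ 5 by omega)
      (show (0:ℕ) ≠ 7 by omega) (show (2:ℕ) ≠ 5 by omega) (show (2:ℕ) ≠ 7 by omega)]
    simp only [tval_var, Function.update_self,
      Function.update_of_ne (show (0:ℕ) ≠ 2 by omega)]
  · rw [Sat_nall']
    refine forall_congr' fun y => ?_
    rw [Sat_nall']
    refine forall_congr' fun y' => ?_
    rw [Sat_impF, Sat_and',
      Sat_HmemF (t := .var 0) (u := .var 2) (show (0:ℕ) ≠ 5 by omega)
        (show (0:ℕ) ≠ 7 by omega) (show (2:ℕ) ≠ 5 by omega) (show (2:ℕ) ≠ 7 by omega),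
      Sat_HmemF (t := .var 0) (u := .var 4) (show (0:ℕ) ≠ 5 by omega)
        (show (0:ℕ) ≠ 7 by omega) (show (4:ℕ) ≠ 5 by omega) (show (4:ℕ) ≠ 7 by omega),
      Sat_eq']
    simp only [tval_var, Function.update_self,
      Function.update_of_ne (show (0:ℕ) ≠ 2 by omega),
      Function.update_of_ne (show (0:ℕ) ≠ 4 by omega),
      Function.update_of_ne (show (2:ℕ) ≠ 4 by omega)]
    exact and_imp

/-- Set assignment: `Xv ↦ W`, everything else `Z`. -/
def AW (Xv : ℕ) (W Z : Set ℕ) : ℕ → Set ℕ := fun i => if i = Xv then W else Z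

/-- The stem `s` dictates the first `s.length` values of `h` and bits of `W`. -/
def StemOK (s : List ℕ) (W : Set ℕ) (h : ℕ → ℕ) : Prop :=
  ∀ j, j < s.length →
    (h j = (Nat.unpair (s.getD j 0)).1 ∧ (j ∈ W ↔ (Nat.unpair (s.getD j 0)).2 = 0))

def phiStem (Xv : ℕ) (ψ : Fml) (s : List ℕ) : Fml :=
  .sex 1 ((stemF 0 s).and (totF.and (TransF Xv ψ true 3)))

lemma sigma11_phiStem {Xv : ℕ} {ψ : Fml} {s : List ℕ} : (phiStem Xv ψ s).sigma11 :=
  Or.inr ⟨1, (stemF 0 s).and (totF.and (TransF Xv ψ true 3)),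
    ⟨arith_stemF s 0, arith_totF, arith_TransF Xv ψ true 3⟩, rfl⟩

lemma holds1_phiStem {Xv : ℕ} {ψ : Fml} (hψ : ψ.arithmetical) (hEv : ψ.Ev)
    (s : List ℕ) (Z : Set ℕ) :
    holds1 (phiStem Xv ψ s) Z ↔
      ∃ (W : Set ℕ) (h : ℕ → ℕ), StemOK s W h ∧
        Q h ψ true 0 (fun _ => 0) (AW Xv W Z) := by
  rw [holds1, phiStem]
  change Sat stdU _ _ _ ↔ _
  rw [Sat_sex']
  constructor
  · rintro ⟨U, -, hU⟩
    obtain ⟨hstem, hrest⟩ := Sat_and'.mp hU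
    obtain ⟨htot, htrans⟩ := Sat_and'.mp hrest
    rw [Sat_totF] at htot
    have hU1 : Function.update (fun _ : ℕ => Z) 1 U 1 = U := Function.update_self _ _ _
    set hh : ℕ → ℕ := fun k => Classical.choose (htot k).1 with hhh
    have hhspec : ∀ k, Nat.pair 1 (Nat.pair k (hh k)) ∈
        Function.update (fun _ : ℕ => Z) 1 U 1 := fun k => Classical.choose_spec (htot k).1
    have hpack : ∀ k y, (Nat.pair 1 (Nat.pair k y) ∈ Function.update (fun _ : ℕ => Z) 1 U 1)
        ↔ hh k = y := by
      intro k y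
      constructor
      · intro hm
        exact (htot k).2 (hh k) y (hhspec k) hm
      · rintro rfl
        exact hhspec k
    set W : Set ℕ := {m : ℕ | Nat.pair 0 m ∈ U} with hW
    have hpackW : ∀ m, (Nat.pair 0 m ∈ Function.update (fun _ : ℕ => Z) 1 U 1)
        ↔ m ∈ AW Xv W Z Xv := by
      intro m
      rw [hU1]
      show _ ↔ m ∈ (if Xv = Xv then W else Z)
      rw [if_pos rfl]
      exact Iff.rfl
    refine ⟨W, hh, ?_, ?_⟩
    · intro j hj
      have := (Sat_stemF s 0).mp hstem j hj
      rw [Nat.zero_add] at this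
      exact ⟨(hpack j _).mp this.1, by
        show Nat.pair 0 j ∈ U ↔ _
        rw [← hU1] at this ⊢
        exact ⟨fun hm => this.2.mpr hm, fun h2 => this.2.mp h2⟩⟩
    · have hA : ∀ i, i ≠ 1 → i ≠ Xv →
          Function.update (fun _ : ℕ => Z) 1 U i = AW Xv W Z i := by
        intro i h1 hX
        rw [Function.update_of_ne h1]
        show Z = (if i = Xv then W else Z)
        rw [if_neg hX]
      have := (Sat_TransF hψ true 3 (Or.inr rfl) hEv (fun _ => 0) (fun _ => 0)
        (fun _ _ => rfl) _ (AW Xv W Z) hA hh hpack hpackW).mp htrans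
      exact this
  · rintro ⟨W, h, hstem, hq⟩
    set U : Set ℕ := {c : ℕ | (∃ k, c = Nat.pair 1 (Nat.pair k (h k))) ∨
      (∃ m, m ∈ W ∧ c = Nat.pair 0 m)} with hUdef
    have hU1 : Function.update (fun _ : ℕ => Z) 1 U 1 = U := Function.update_self _ _ _
    have hpack : ∀ k y, (Nat.pair 1 (Nat.pair k y) ∈ Function.update (fun _ : ℕ => Z) 1 U 1)
        ↔ h k = y := by
      intro k y
      rw [hU1]
      constructor
      · rintro (⟨k', he⟩ | ⟨m, hm, he⟩)
        · rw [Nat.pair_eq_pair] at he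
          obtain ⟨-, he2⟩ := he
          rw [Nat.pair_eq_pair] at he2
          rw [he2.1, ← he2.2]
        · rw [Nat.pair_eq_pair] at he
          omega
      · rintro rfl
        exact Or.inl ⟨k, rfl⟩
    have hpackW : ∀ m, (Nat.pair 0 m ∈ Function.update (fun _ : ℕ => Z) 1 U 1)
        ↔ m ∈ AW Xv W Z Xv := by
      intro m
      rw [hU1]
      have : m ∈ AW Xv W Z Xv ↔ m ∈ W := by
        show m ∈ (if Xv = Xv then W else Z) ↔ _
        rw [if_pos rfl]
      rw [this]
      constructor
      · rintro (⟨k', he⟩ | ⟨m', hm', he⟩)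
        · rw [Nat.pair_eq_pair] at he
          omega
        · rw [Nat.pair_eq_pair] at he
          rwa [he.2]
      · intro hm
        exact Or.inr ⟨m, hm, rfl⟩
    refine ⟨U, trivial, Sat_and'.mpr ⟨?_, Sat_and'.mpr ⟨?_, ?_⟩⟩⟩
    · rw [Sat_stemF]
      intro j hj
      rw [Nat.zero_add]
      obtain ⟨hsj1, hsj2⟩ := hstem j hj
      constructor
      · rw [hpack j _]
        exact hsj1
      · rw [← hU1]
        constructor
        · intro h0
          exact (hpackW j).mpr (by
            show j ∈ (if Xv = Xv then W else Z)
            rw [if_pos rfl]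
            exact hsj2.mpr h0)
        · intro hm
          have := (hpackW j).mp hm
          rw [show AW Xv W Z Xv = W from by rw [AW, if_pos rfl]] at this
          exact hsj2.mp this
    · rw [Sat_totF]
      intro k
      constructor
      · exact ⟨h k, by rw [← hU1]; exact (hpack k (h k)).mpr rfl⟩
      · intro y y' hy hy'
        rw [← hU1] at hy hy'
        have h1 := (hpack k y).mp hy
        have h2 := (hpack k y').mp hy'
        omega
    · have hA : ∀ i, i ≠ 1 → i ≠ Xv →
          Function.update (fun _ : ℕ => Z) 1 U i = AW Xv W Z i := by
        intro i h1 hX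
        rw [Function.update_of_ne h1]
        show Z = (if i = Xv then W else Z)
        rw [if_neg hX]
      exact (Sat_TransF hψ true 3 (Or.inr rfl) hEv (fun _ => 0) (fun _ => 0)
        (fun _ _ => rfl) _ (AW Xv W Z) hA h hpack hpackW).mpr hq

end
end SOA

namespace SOA
open Classical

noncomputable section

/-- Extract the arithmetical matrix and the witness-variable of a Σ¹₁ formula. -/
def skolemData : Fml → Fml × ℕ
  | .sex X ψ₀ => (ψ₀.mapEven, 2*X)
  | φ => (φ.mapEven, 3)

private lemma AW_comp_arith (W Z : Set ℕ) : (fun i => AW 3 W Z (2*i)) = fun _ : ℕ => Z := by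
  funext i
  show (if 2*i = 3 then W else Z) = Z
  rw [if_neg (by omega)]

private lemma skolem_arith_case {φ : Fml} (ha : φ.arithmetical) (Z : Set ℕ) :
    holds1 φ Z ↔ ∃ W : Set ℕ, Sat stdU (fun _ => (0:ℕ)) (AW 3 W Z) φ.mapEven := by
  constructor
  · intro hs
    refine ⟨∅, ?_⟩
    rw [Sat_mapEven ha, AW_comp_arith]
    exact hs
  · rintro ⟨W, hW⟩
    rw [Sat_mapEven ha, AW_comp_arith] at hW
    exact hW

lemma skolemData_spec {φ : Fml} (hφ : φ.sigma11) :
    (skolemData φ).1.arithmetical ∧ (skolemData φ).1.Ev ∧ (skolemData φ).2 ≠ 1 ∧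
    ∀ Z : Set ℕ, holds1 φ Z ↔ ∃ W : Set ℕ,
      Sat stdU (fun _ => (0:ℕ)) (AW (skolemData φ).2 W Z) (skolemData φ).1 := by
  cases φ with
  | sex X ψ₀ =>
      have hψ : ψ₀.arithmetical := by
        rcases hφ with ha | ⟨X', ψ', hψ', heq⟩
        · exact ha.elim
        · injection heq with h1 h2
          rw [h2]
          exact hψ'
      refine ⟨mapEven_arith hψ, mapEven_Ev hψ, show (2*X : ℕ) ≠ 1 by omega, fun Z => ?_⟩
      show Sat stdU (fun _ => (0:ℕ)) (fun _ => Z) (.sex X ψ₀) ↔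
        ∃ W : Set ℕ, Sat stdU (fun _ => (0:ℕ)) (AW (2*X) W Z) ψ₀.mapEven
      rw [Sat_sex']
      have key : ∀ W : Set ℕ, (fun i => AW (2*X) W Z (2*i)) =
          Function.update (fun _ : ℕ => Z) X W := by
        intro W
        funext i
        show (if 2*i = 2*X then W else Z) = _
        by_cases hi : i = X
        · subst hi; rw [if_pos rfl, Function.update_self]
        · rw [if_neg (by omega), Function.update_of_ne hi]
      constructor
      · rintro ⟨W, -, hW⟩
        refine ⟨W, ?_⟩
        rw [Sat_mapEven hψ, key]
        exact hW
      · rintro ⟨W, hW⟩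
        refine ⟨W, trivial, ?_⟩
        rw [Sat_mapEven hψ, key] at hW
        exact hW
  | eq t u =>
      have ha : (Fml.eq t u).arithmetical := by
        rcases hφ with ha | ⟨X', ψ', hψ', heq⟩
        · exact ha
        · cases heq
      exact ⟨mapEven_arith ha, mapEven_Ev ha, show (3:ℕ) ≠ 1 by omega, skolem_arith_case ha⟩
  | lt t u =>
      have ha : (Fml.lt t u).arithmetical := by
        rcases hφ with ha | ⟨X', ψ', hψ', heq⟩
        · exact ha
        · cases heq
      exact ⟨mapEven_arith ha, mapEven_Ev ha, show (3:ℕ) ≠ 1 by omega, skolem_arith_case ha⟩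
  | mem t i =>
      have ha : (Fml.mem t i).arithmetical := by
        rcases hφ with ha | ⟨X', ψ', hψ', heq⟩
        · exact ha
        · cases heq
      exact ⟨mapEven_arith ha, mapEven_Ev ha, show (3:ℕ) ≠ 1 by omega, skolem_arith_case ha⟩
  | not ψ =>
      have ha : ψ.not.arithmetical := by
        rcases hφ with ha | ⟨X', ψ', hψ', heq⟩
        · exact ha
        · cases heq
      exact ⟨mapEven_arith ha, mapEven_Ev ha, show (3:ℕ) ≠ 1 by omega, skolem_arith_case ha⟩
  | and ψ χ =>
      have ha : (ψ.and χ).arithmetical := by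
        rcases hφ with ha | ⟨X', ψ', hψ', heq⟩
        · exact ha
        · cases heq
      exact ⟨mapEven_arith ha, mapEven_Ev ha, show (3:ℕ) ≠ 1 by omega, skolem_arith_case ha⟩
  | nall x ψ =>
      have ha : (Fml.nall x ψ).arithmetical := by
        rcases hφ with ha | ⟨X', ψ', hψ', heq⟩
        · exact ha
        · cases heq
      exact ⟨mapEven_arith ha, mapEven_Ev ha, show (3:ℕ) ≠ 1 by omega, skolem_arith_case ha⟩
  | nex x ψ =>
      have ha : (Fml.nex x ψ).arithmetical := by
        rcases hφ with ha | ⟨X', ψ', hψ', heq⟩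
        · exact ha
        · cases heq
      exact ⟨mapEven_arith ha, mapEven_Ev ha, show (3:ℕ) ≠ 1 by omega, skolem_arith_case ha⟩
  | ballLt x t ψ =>
      have ha : (Fml.ballLt x t ψ).arithmetical := by
        rcases hφ with ha | ⟨X', ψ', hψ', heq⟩
        · exact ha
        · cases heq
      exact ⟨mapEven_arith ha, mapEven_Ev ha, show (3:ℕ) ≠ 1 by omega, skolem_arith_case ha⟩
  | bexLt x t ψ =>
      have ha : (Fml.bexLt x t ψ).arithmetical := by
        rcases hφ with ha | ⟨X', ψ', hψ', heq⟩
        · exact ha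
        · cases heq
      exact ⟨mapEven_arith ha, mapEven_Ev ha, show (3:ℕ) ≠ 1 by omega, skolem_arith_case ha⟩
  | sall X ψ =>
      have : False := by
        rcases hφ with ha | ⟨X', ψ', hψ', heq⟩
        · exact ha
        · cases heq
      exact this.elim

/-- The stem-refined Σ¹₁ class attached to a Σ¹₁ formula. -/
def CSTf (φ : Fml) (s : List ℕ) : Set (Set ℕ) :=
  {Z | ∃ (W : Set ℕ) (h : ℕ → ℕ), StemOK s W h ∧
    Q h (skolemData φ).1 true 0 (fun _ => 0) (AW (skolemData φ).2 W Z)}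

lemma CSTf_class {φ : Fml} (hφ : φ.sigma11) (s : List ℕ) : Sigma11Class (CSTf φ s) := by
  obtain ⟨ha, hEv, -, -⟩ := skolemData_spec hφ
  refine ⟨phiStem (skolemData φ).2 (skolemData φ).1 s, sigma11_phiStem, fun X => ?_⟩
  rw [holds1_phiStem ha hEv s X]
  exact Iff.rfl

lemma CSTf_nil {φ : Fml} (hφ : φ.sigma11) : CSTf φ [] = {Z | holds1 φ Z} := by
  obtain ⟨ha, hEv, -, hiff⟩ := skolemData_spec hφ
  ext Z
  show (∃ (W : Set ℕ) (h : ℕ → ℕ), StemOK [] W h ∧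
    Q h (skolemData φ).1 true 0 (fun _ => (0:ℕ)) (AW (skolemData φ).2 W Z)) ↔ holds1 φ Z
  rw [hiff Z]
  constructor
  · rintro ⟨W, h, -, hq⟩
    exact ⟨W, (Sat_iff_exists_Q ha).mpr ⟨h, hq⟩⟩
  · rintro ⟨W, hW⟩
    obtain ⟨h, hq⟩ := (Sat_iff_exists_Q ha (tr := 0)).mp hW
    exact ⟨W, h, fun j hj => absurd hj (by simp), hq⟩

lemma CSTf_refine {φ : Fml} {s : List ℕ} {Z : Set ℕ} (hZ : Z ∈ CSTf φ s) :
    ∃ a, Z ∈ CSTf φ (s ++ [a]) := by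
  obtain ⟨W, h, hstem, hq⟩ := hZ
  refine ⟨Nat.pair (h s.length) (if s.length ∈ W then 0 else 1), W, h, ?_, hq⟩
  intro j hj
  rw [List.length_append, List.length_singleton] at hj
  by_cases hjs : j < s.length
  · rw [List.getD_append _ _ _ _ hjs]
    exact hstem j hjs
  · have hj' : j = s.length := by omega
    subst hj'
    rw [show (s ++ [Nat.pair (h s.length) (if s.length ∈ W then 0 else 1)]).getD s.length 0
        = Nat.pair (h s.length) (if s.length ∈ W then 0 else 1) from ?_]
    · rw [Nat.unpair_pair]
      refine ⟨rfl, ?_⟩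
      by_cases hw : s.length ∈ W
      · simp [hw]
      · simp [hw]
    · rw [List.getD_eq_getElem _ _ (by simp)]
      exact List.getElem_concat_length rfl _
lemma CSTf_prefix {φ : Fml} {s t : List ℕ} (hst : s <+: t) : CSTf φ t ⊆ CSTf φ s := by
  rintro Z ⟨W, h, hstem, hq⟩
  refine ⟨W, h, fun j hj => ?_, hq⟩
  have hjt : j < t.length := lt_of_lt_of_le hj hst.length_le
  have := hstem j hjt
  rwa [show t.getD j 0 = s.getD j 0 from ?_] at this
  rw [List.getD_eq_getElem _ _ hjt, List.getD_eq_getElem _ _ hj, hst.getElem hj]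

/-- Limit lemma: if approximations of `Z∞` lie in `CSTf φ` along ever-longer stems
of a fixed infinite branch, then `Z∞` satisfies `φ`. -/
lemma CSTf_limit {φ : Fml} (hφ : φ.sigma11) (slim : ℕ → ℕ) (Zi : Set ℕ)
    (happ : ∀ n : ℕ, ∃ Z' : Set ℕ,
      Z' ∈ CSTf φ (List.ofFn fun i : Fin n => slim i) ∧ ∀ j, j < n → (j ∈ Z' ↔ j ∈ Zi)) :
    holds1 φ Zi := by
  obtain ⟨ha, hEv, -, hiff⟩ := skolemData_spec hφ
  set hh : ℕ → ℕ := fun k => (Nat.unpair (slim k)).1 with hhdef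
  set Wi : Set ℕ := {k : ℕ | (Nat.unpair (slim k)).2 = 0} with hWdef
  have hQ : Q hh (skolemData φ).1 true 0 (fun _ => 0) (AW (skolemData φ).2 Wi Zi) := by
    refine Q_closed ha true 0 (fun _ => 0) _ hh fun n => ?_
    obtain ⟨Z', hZ', hagree⟩ := happ n
    obtain ⟨W', h', hstem, hq⟩ := hZ'
    have hlen : (List.ofFn fun i : Fin n => slim i).length = n := by simp
    have hget : ∀ j, j < n → (List.ofFn fun i : Fin n => slim i).getD j 0 = slim j := by
      intro j hj
      rw [List.getD_eq_getElem _ _ (by omega)]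
      simp
    refine ⟨AW (skolemData φ).2 W' Z', h', ?_, ?_, hq⟩
    · intro i j hi hj
      show (j ∈ (if i = (skolemData φ).2 then W' else Z')) ↔
        (j ∈ (if i = (skolemData φ).2 then Wi else Zi))
      by_cases hiX : i = (skolemData φ).2
      · rw [if_pos hiX, if_pos hiX]
        have := (hstem j (by omega)).2
        rw [hget j hj] at this
        rw [this]
        exact Iff.rfl
      · rw [if_neg hiX, if_neg hiX]
        exact hagree j hj
    · intro k hk
      have := (hstem k (by omega)).1
      rwa [hget k hk] at this
  rw [hiff]
  exact ⟨Wi, (Q_sound ha hQ).mpr rfl⟩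

end
end SOA

namespace SOA
open Classical

noncomputable section

def Term.code : Term → ℕ
  | .var n => Nat.pair 0 n
  | .zero => Nat.pair 1 0
  | .succ t => Nat.pair 2 t.code
  | .add t u => Nat.pair 3 (Nat.pair t.code u.code)
  | .mul t u => Nat.pair 4 (Nat.pair t.code u.code)

lemma Term.code_inj : ∀ t u : Term, t.code = u.code → t = u := by
  intro t
  induction t with
  | var n =>
      intro u h
      cases u <;> simp [Term.code, Nat.pair_eq_pair] at h
      rw [h]
  | zero =>
      intro u h
      cases u <;> simp [Term.code, Nat.pair_eq_pair] at h
      rfl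
  | succ t ih =>
      intro u h
      cases u <;> simp [Term.code, Nat.pair_eq_pair] at h
      rw [ih _ h]
  | add t u iht ihu =>
      intro w h
      cases w <;> simp [Term.code, Nat.pair_eq_pair] at h
      rw [iht _ h.1, ihu _ h.2]
  | mul t u iht ihu =>
      intro w h
      cases w <;> simp [Term.code, Nat.pair_eq_pair] at h
      rw [iht _ h.1, ihu _ h.2]

def Fml.code : Fml → ℕ
  | .eq t u => Nat.pair 0 (Nat.pair t.code u.code)
  | .lt t u => Nat.pair 1 (Nat.pair t.code u.code)
  | .mem t i => Nat.pair 2 (Nat.pair t.code i)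
  | .not φ => Nat.pair 3 φ.code
  | .and φ ψ => Nat.pair 4 (Nat.pair φ.code ψ.code)
  | .nall x φ => Nat.pair 5 (Nat.pair x φ.code)
  | .nex x φ => Nat.pair 6 (Nat.pair x φ.code)
  | .ballLt x t φ => Nat.pair 7 (Nat.pair x (Nat.pair t.code φ.code))
  | .bexLt x t φ => Nat.pair 8 (Nat.pair x (Nat.pair t.code φ.code))
  | .sall X φ => Nat.pair 9 (Nat.pair X φ.code)
  | .sex X φ => Nat.pair 10 (Nat.pair X φ.code)

lemma Fml.code_inj : ∀ φ ψ : Fml, φ.code = ψ.code → φ = ψ := by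
  intro φ
  induction φ with
  | eq t u =>
      intro ψ h
      cases ψ <;> simp [Fml.code, Nat.pair_eq_pair] at h
      rw [Term.code_inj _ _ h.1, Term.code_inj _ _ h.2]
  | lt t u =>
      intro ψ h
      cases ψ <;> simp [Fml.code, Nat.pair_eq_pair] at h
      rw [Term.code_inj _ _ h.1, Term.code_inj _ _ h.2]
  | mem t i =>
      intro ψ h
      cases ψ <;> simp [Fml.code, Nat.pair_eq_pair] at h
      rw [Term.code_inj _ _ h.1, h.2]
  | not φ ih =>
      intro ψ h
      cases ψ <;> simp [Fml.code, Nat.pair_eq_pair] at h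
      rw [ih _ h]
  | and φ χ ih1 ih2 =>
      intro ψ h
      cases ψ <;> simp [Fml.code, Nat.pair_eq_pair] at h
      rw [ih1 _ h.1, ih2 _ h.2]
  | nall x φ ih =>
      intro ψ h
      cases ψ <;> simp [Fml.code, Nat.pair_eq_pair] at h
      rw [h.1, ih _ h.2]
  | nex x φ ih =>
      intro ψ h
      cases ψ <;> simp [Fml.code, Nat.pair_eq_pair] at h
      rw [h.1, ih _ h.2]
  | ballLt x t φ ih =>
      intro ψ h
      cases ψ <;> simp [Fml.code, Nat.pair_eq_pair] at h
      rw [h.1, Term.code_inj _ _ h.2.1, ih _ h.2.2]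
  | bexLt x t φ ih =>
      intro ψ h
      cases ψ <;> simp [Fml.code, Nat.pair_eq_pair] at h
      rw [h.1, Term.code_inj _ _ h.2.1, ih _ h.2.2]
  | sall X φ ih =>
      intro ψ h
      cases ψ <;> simp [Fml.code, Nat.pair_eq_pair] at h
      rw [h.1, ih _ h.2]
  | sex X φ ih =>
      intro ψ h
      cases ψ <;> simp [Fml.code, Nat.pair_eq_pair] at h
      rw [h.1, ih _ h.2]

/-- A set of naturals `codeSet D` determines `D`. -/
lemma codeSet_injective : Function.Injective codeSet := by
  intro D₁ D₂ h
  ext q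
  have key : ∀ D : Set Cond, q ∈ D ↔ Encodable.encode q ∈ codeSet D := by
    intro D
    constructor
    · intro hq; exact ⟨q, hq, rfl⟩
    · rintro ⟨q', hq', he⟩
      rwa [← Encodable.encode_injective he]
  rw [key D₁, key D₂, h]

/-- The family of dense sets that the generic must meet. -/
def Fam (S : ℕ → Set (Set ℕ)) : Set (Set Cond) :=
  {D | DenseIn (Conds S) D ∧ DefOverFrom (HYPin ∅) ∅ (codeSet D)}

lemma Fam_countable (S : ℕ → Set (Set ℕ)) : (Fam S).Countable := by
  rw [Set.countable_iff_exists_injOn]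
  set P : Set Cond → Prop := fun D => ∃ φ : Fml, ∀ n : ℕ,
    n ∈ codeSet D ↔ Sat (stdModel (HYPin ∅)) (fun _ => n) (fun _ => ∅) φ with hP
  refine ⟨fun D => if h : P D then (Classical.choose h).code else 0, ?_⟩
  intro D₁ h₁ D₂ h₂ heq
  have hP₁ : P D₁ := h₁.2
  have hP₂ : P D₂ := h₂.2
  simp only [] at heq
  rw [dif_pos hP₁, dif_pos hP₂] at heq
  have hφ := Fml.code_inj _ _ heq
  have hs₁ := Classical.choose_spec hP₁
  have hs₂ := Classical.choose_spec hP₂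
  rw [hφ] at hs₁
  refine codeSet_injective ?_
  ext n
  rw [hs₁ n, hs₂ n]

/-- Enumeration of the family (with junk values allowed). -/
def DSeq (S : ℕ → Set (Set ℕ)) : ℕ → Set Cond :=
  if h : (Fam S).Nonempty then Classical.choose ((Fam_countable S).exists_eq_range h)
  else fun _ => ∅

lemma DSeq_covers {S : ℕ → Set (Set ℕ)} {D : Set Cond} (hD : D ∈ Fam S) :
    ∃ m, DSeq S m = D := by
  have hne : (Fam S).Nonempty := ⟨D, hD⟩
  have hspec := Classical.choose_spec ((Fam_countable S).exists_eq_range hne)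
  rw [DSeq, dif_pos hne]
  rw [hspec] at hD
  obtain ⟨m, hm⟩ := hD
  exact ⟨m, hm⟩

end
end SOA

namespace SOA
open Classical

noncomputable section

variable (S : ℕ → Set (Set ℕ)) (hS : IsS11Enum S)

def phiOf (e : ℕ) : Fml := Classical.choose (hS.1 e)

lemma phiOf_spec (e : ℕ) :
    (phiOf S hS e).sigma11 ∧ ∀ X, X ∈ S e ↔ holds1 (phiOf S hS e) X :=
  Classical.choose_spec (hS.1 e)

def CSTe (e : ℕ) (s : List ℕ) : Set (Set ℕ) := CSTf (phiOf S hS e) s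

def stIdx (e : ℕ) (s : List ℕ) : ℕ :=
  Classical.choose (hS.2 _ (CSTf_class (phiOf_spec S hS e).1 s))

lemma stIdx_spec (e : ℕ) (s : List ℕ) : S (stIdx S hS e s) = CSTe S hS e s :=
  Classical.choose_spec (hS.2 _ (CSTf_class (phiOf_spec S hS e).1 s))

def CbitC (j : ℕ) (v : Bool) : Set (Set ℕ) := {X | (Nat.pair 0 j ∈ X) ↔ v = true}

lemma CbitC_class (j : ℕ) (v : Bool) : Sigma11Class (CbitC j v) := by
  cases v
  · refine ⟨.not (.mem (numeral (Nat.pair 0 j)) 0), Or.inl trivial, fun X => ?_⟩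
    rw [holds1]
    change _ ↔ Sat stdU _ _ _
    rw [Sat_not', Sat_mem', tval_numeral]
    show (Nat.pair 0 j ∈ X ↔ false = true) ↔ ¬ (Nat.pair 0 j ∈ X)
    simp
  · refine ⟨.mem (numeral (Nat.pair 0 j)) 0, Or.inl trivial, fun X => ?_⟩
    rw [holds1]
    change _ ↔ Sat stdU _ _ _
    rw [Sat_mem', tval_numeral]
    show (Nat.pair 0 j ∈ X ↔ true = true) ↔ (Nat.pair 0 j ∈ X)
    simp

def bIdx (j : ℕ) (v : Bool) : ℕ := Classical.choose (hS.2 _ (CbitC_class j v))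

lemma bIdx_spec (j : ℕ) (v : Bool) : S (bIdx S hS j v) = CbitC j v :=
  Classical.choose_spec (hS.2 _ (CbitC_class j v))

lemma mem_listJoin_pair {l : List ℕ} {Xs : ℕ → Set ℕ} {c : ℕ} :
    c ∈ listJoin (l.map Xs) ↔
      ((Nat.unpair c).1 < l.length ∧ (Nat.unpair c).2 ∈ Xs (l.getD (Nat.unpair c).1 0)) := by
  show ((Nat.unpair c).1 < (l.map Xs).length ∧
    (Nat.unpair c).2 ∈ (l.map Xs).getD (Nat.unpair c).1 ∅) ↔ _
  constructor
  · rintro ⟨h1, h2⟩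
    rw [List.length_map] at h1
    refine ⟨h1, ?_⟩
    rwa [List.getD_eq_getElem _ _ (by rw [List.length_map]; exact h1), List.getElem_map,
      ← List.getD_eq_getElem _ _ h1] at h2
  · rintro ⟨h1, h2⟩
    refine ⟨by rw [List.length_map]; exact h1, ?_⟩
    rwa [List.getD_eq_getElem _ _ (by rw [List.length_map]; exact h1), List.getElem_map,
      ← List.getD_eq_getElem _ _ h1]

lemma bit_forces {q : Cond} {Xs : ℕ → Set ℕ} {i j : ℕ} {v : Bool}
    (hpair : (bIdx S hS j v, [i]) ∈ q) (hm : Meets S Xs q) : ((j ∈ Xs i) ↔ v = true) := by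
  have hmem : listJoin ([i].map Xs) ∈ S (bIdx S hS j v) := hm _ hpair
  rw [bIdx_spec S hS j v] at hmem
  have hj : (Nat.pair 0 j ∈ listJoin ([i].map Xs)) ↔ j ∈ Xs i := by
    rw [mem_listJoin_pair, Nat.unpair_pair]
    simp
  rw [show (listJoin ([i].map Xs) ∈ CbitC j v) =
    ((Nat.pair 0 j ∈ listJoin ([i].map Xs)) ↔ v = true) from rfl, hj] at hmem
  exact hmem

lemma meets_insert {Xs : ℕ → Set ℕ} {p : Cond} (h : Meets S Xs p) {a : ℕ × List ℕ}
    (ha : listJoin (a.2.map Xs) ∈ S a.1) : Meets S Xs (insert a p) := by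
  intro q hq
  rcases Finset.mem_insert.mp hq with rfl | hq
  · exact ha
  · exact h q hq

def GoodSt (σ : Cond × ((ℕ × List ℕ) → List ℕ)) : Prop :=
  (∃ Xs, Meets S Xs σ.1) ∧
  ∀ r : ℕ × List ℕ, σ.2 r ≠ [] → (stIdx S hS r.1 (σ.2 r), r.2) ∈ σ.1

def StepRel (n : ℕ) (σ σ' : Cond × ((ℕ × List ℕ) → List ℕ)) : Prop :=
  σ.1 ⊆ σ'.1 ∧ (∀ r, σ.2 r <+: σ'.2 r) ∧
  (n % 3 = 0 → ∃ v : Bool,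
    (bIdx S hS (Nat.unpair (n/3)).2 v, [(Nat.unpair (n/3)).1]) ∈ σ'.1) ∧
  (n % 3 = 1 → ∀ r : ℕ × List ℕ, Encodable.encode r = (Nat.unpair (n/3)).2 → r ∈ σ.1 →
      (σ'.2 r).length ≥ (σ.2 r).length + 1) ∧
  (n % 3 = 2 → (∃ q ∈ DSeq S (n/3), σ.1 ⊆ q ∧ q ∈ Conds S) →
      ∃ q ∈ DSeq S (n/3), σ.1 ⊆ q ∧ q ⊆ σ'.1)

lemma step_total (σ : Cond × ((ℕ × List ℕ) → List ℕ)) (hσ : GoodSt S hS σ) (n : ℕ) :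
    ∃ σ', GoodSt S hS σ' ∧ StepRel S hS n σ σ' := by
  obtain ⟨pc, st⟩ := σ
  obtain ⟨⟨Xs, hXs⟩, hstem⟩ := hσ
  have h3 : n % 3 = 0 ∨ n % 3 = 1 ∨ n % 3 = 2 := by omega
  rcases h3 with h0 | h1 | h2
  · -- bit step
    set i := (Nat.unpair (n/3)).1 with hi
    set j := (Nat.unpair (n/3)).2 with hjj
    have key : ∀ v : Bool, ((j ∈ Xs i) ↔ v = true) →
        ∃ σ', GoodSt S hS σ' ∧ StepRel S hS n (pc, st) σ' := by
      intro v hv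
      have hbit : listJoin ([i].map Xs) ∈ S (bIdx S hS j v) := by
        rw [bIdx_spec S hS j v]
        show (Nat.pair 0 j ∈ listJoin ([i].map Xs)) ↔ v = true
        rw [mem_listJoin_pair, Nat.unpair_pair]
        simpa using hv
      refine ⟨(insert (bIdx S hS j v, [i]) pc, st),
        ⟨⟨Xs, meets_insert S hXs hbit⟩, fun r hr => Finset.mem_insert_of_mem (hstem r hr)⟩,
        Finset.subset_insert _ _, fun r => List.prefix_refl _,
        fun _ => ⟨v, Finset.mem_insert_self _ _⟩,
        fun hc => (by omega : False).elim,
        fun hc => (by omega : False).elim⟩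
    by_cases hj : j ∈ Xs i
    · exact key true (by simp [hj])
    · exact key false (by simp [hj])
  · -- stem step
    by_cases hex : ∃ r : ℕ × List ℕ, Encodable.encode r = (Nat.unpair (n/3)).2 ∧ r ∈ pc
    · obtain ⟨r, hrenc, hrp⟩ := hex
      have hZ : listJoin (r.2.map Xs) ∈ CSTe S hS r.1 (st r) := by
        by_cases hnil : st r = []
        · rw [hnil, CSTe, CSTf_nil (phiOf_spec S hS r.1).1]
          exact ((phiOf_spec S hS r.1).2 _).mp (hXs _ hrp)
        · have hthis : listJoin (r.2.map Xs) ∈ S (stIdx S hS r.1 (st r)) :=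
            hXs _ (hstem r hnil)
          rwa [stIdx_spec S hS r.1 (st r)] at hthis
      obtain ⟨a, ha⟩ := CSTf_refine hZ
      have hins : listJoin (r.2.map Xs) ∈ S (stIdx S hS r.1 (st r ++ [a])) := by
        rw [stIdx_spec S hS r.1 (st r ++ [a])]
        exact ha
      refine ⟨(insert (stIdx S hS r.1 (st r ++ [a]), r.2) pc,
        Function.update st r (st r ++ [a])),
        ⟨⟨Xs, meets_insert S hXs hins⟩, ?_⟩,
        Finset.subset_insert _ _, ?_,
        fun hc => (by omega : False).elim, ?_,
        fun hc => (by omega : False).elim⟩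
      · intro r' hr'
        replace hr' : Function.update st r (st r ++ [a]) r' ≠ [] := hr'
        show (stIdx S hS r'.1 (Function.update st r (st r ++ [a]) r'), r'.2) ∈
          insert (stIdx S hS r.1 (st r ++ [a]), r.2) pc
        by_cases hrr : r' = r
        · subst hrr
          rw [Function.update_self]
          exact Finset.mem_insert_self _ _
        · rw [Function.update_of_ne hrr] at hr' ⊢
          exact Finset.mem_insert_of_mem (hstem r' hr')
      · intro r'
        show st r' <+: Function.update st r (st r ++ [a]) r'
        by_cases hrr : r' = r
        · subst hrr
          rw [Function.update_self]
          exact ⟨[a], rfl⟩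
        · rw [Function.update_of_ne hrr]
      · intro _ r' henc hr'p
        have hre : r' = r := Encodable.encode_injective (by rw [hrenc, henc])
        subst hre
        show (Function.update st r' (st r' ++ [a]) r').length ≥ (st r').length + 1
        rw [Function.update_self, List.length_append]
        simp
    · refine ⟨(pc, st), ⟨⟨Xs, hXs⟩, hstem⟩, Finset.Subset.refl _, fun r => List.prefix_refl _,
        fun hc => (by omega : False).elim, ?_, fun hc => (by omega : False).elim⟩
      intro _ r' henc hr'p
      exact absurd ⟨r', henc, hr'p⟩ hex
  · -- dense step
    by_cases hq : ∃ q ∈ DSeq S (n/3), pc ⊆ q ∧ q ∈ Conds S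
    · obtain ⟨q, hqD, hsub, hqC⟩ := hq
      refine ⟨(q, st), ⟨hqC, fun r hr => hsub (hstem r hr)⟩, hsub, fun r => List.prefix_refl _,
        fun hc => (by omega : False).elim, fun hc => (by omega : False).elim,
        fun _ _ => ⟨q, hqD, hsub, Finset.Subset.refl _⟩⟩
    · refine ⟨(pc, st), ⟨⟨Xs, hXs⟩, hstem⟩, Finset.Subset.refl _, fun r => List.prefix_refl _,
        fun hc => (by omega : False).elim, fun hc => (by omega : False).elim,
        fun _ hc => absurd hc hq⟩

def stepF (σ : {σ // GoodSt S hS σ}) (n : ℕ) : {σ // GoodSt S hS σ} :=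
  ⟨Classical.choose (step_total S hS σ.1 σ.2 n),
   (Classical.choose_spec (step_total S hS σ.1 σ.2 n)).1⟩

lemma stepF_rel (σ : {σ // GoodSt S hS σ}) (n : ℕ) :
    StepRel S hS n σ.1 (stepF S hS σ n).1 :=
  (Classical.choose_spec (step_total S hS σ.1 σ.2 n)).2

variable (p₀ : Cond) (hp₀ : ∃ Xs, Meets S Xs p₀)

def chainF : ℕ → {σ // GoodSt S hS σ}
  | 0 => ⟨(p₀, fun _ => []), ⟨hp₀, fun r hr => absurd rfl hr⟩⟩
  | n+1 => stepF S hS (chainF n) n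

def Pc (k : ℕ) : Cond := (chainF S hS p₀ hp₀ k).1.1
def Stc (k : ℕ) (r : ℕ × List ℕ) : List ℕ := (chainF S hS p₀ hp₀ k).1.2 r

lemma chain_rel (k : ℕ) :
    StepRel S hS k (chainF S hS p₀ hp₀ k).1 (chainF S hS p₀ hp₀ (k+1)).1 :=
  stepF_rel S hS _ k

lemma pc_mono {k m : ℕ} (h : k ≤ m) : Pc S hS p₀ hp₀ k ⊆ Pc S hS p₀ hp₀ m := by
  induction m with
  | zero => rw [Nat.le_zero.mp h]
  | succ m ih =>
      rcases Nat.lt_or_ge k (m+1) with h' | h'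
      · exact (ih (by omega)).trans (chain_rel S hS p₀ hp₀ m).1
      · rw [Nat.le_antisymm h h']
lemma st_mono {k m : ℕ} (h : k ≤ m) (r : ℕ × List ℕ) :
    Stc S hS p₀ hp₀ k r <+: Stc S hS p₀ hp₀ m r := by
  induction m with
  | zero => rw [Nat.le_zero.mp h]
  | succ m ih =>
      rcases Nat.lt_or_ge k (m+1) with h' | h'
      · exact (ih (by omega)).trans ((chain_rel S hS p₀ hp₀ m).2.1 r)
      · rw [Nat.le_antisymm h h']

def Gen : ℕ → Set ℕ :=
  fun i => {j | ∃ k, (bIdx S hS j true, [i]) ∈ Pc S hS p₀ hp₀ k}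

lemma bit_decided (i j m : ℕ) (hm : 3 * Nat.pair i j + 1 ≤ m) (Xs : ℕ → Set ℕ)
    (hXs : Meets S Xs (Pc S hS p₀ hp₀ m)) :
    ((j ∈ Xs i) ↔ j ∈ Gen S hS p₀ hp₀ i) := by
  set n₀ := 3 * Nat.pair i j with hn₀
  have h0 : n₀ % 3 = 0 := by omega
  have hdiv : n₀ / 3 = Nat.pair i j := by omega
  obtain ⟨v, hv⟩ := (chain_rel S hS p₀ hp₀ n₀).2.2.1 h0
  rw [hdiv, Nat.unpair_pair] at hv
  have hvm : (bIdx S hS j v, [i]) ∈ Pc S hS p₀ hp₀ m :=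
    pc_mono S hS p₀ hp₀ (by omega) hv
  have c1 : (j ∈ Xs i) ↔ v = true := bit_forces S hS hvm hXs
  have c2 : (j ∈ Gen S hS p₀ hp₀ i) ↔ v = true := by
    cases v
    · constructor
      · rintro ⟨k, hk⟩
        exfalso
        obtain ⟨Xs', hXs'⟩ := (chainF S hS p₀ hp₀ (max k m)).2.1
        have ht : (j ∈ Xs' i) ↔ true = true := bit_forces S hS
          (pc_mono S hS p₀ hp₀ (le_max_left _ _) hk) hXs'
        have hf : (j ∈ Xs' i) ↔ false = true := bit_forces S hS
          (pc_mono S hS p₀ hp₀ (le_max_right _ _) hvm) hXs'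
        simp at ht hf
        exact hf (ht)
      · intro hc
        cases hc
    · exact iff_of_true ⟨m, hvm⟩ rfl
  rw [c1, ← c2]

lemma stems_grow (r : ℕ × List ℕ) (k : ℕ) (hr : r ∈ Pc S hS p₀ hp₀ k) :
    ∀ N, ∃ m, N ≤ (Stc S hS p₀ hp₀ m r).length := by
  intro N
  induction N with
  | zero => exact ⟨k, by omega⟩
  | succ N ih =>
      obtain ⟨m, hm⟩ := ih
      set c := max m k with hc
      set n := 3 * Nat.pair c (Encodable.encode r) + 1 with hn
      have h1 : n % 3 = 1 := by omega
      have hdiv : n / 3 = Nat.pair c (Encodable.encode r) := by omega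
      have hcn : c ≤ n := by
        have := Nat.left_le_pair c (Encodable.encode r)
        omega
      have hrn : r ∈ Pc S hS p₀ hp₀ n :=
        pc_mono S hS p₀ hp₀ (by omega) hr
      have hlen := (chain_rel S hS p₀ hp₀ n).2.2.2.1 h1 r
        (by rw [hdiv, Nat.unpair_pair]) hrn
      refine ⟨n + 1, ?_⟩
      have hpre : Stc S hS p₀ hp₀ m r <+: Stc S hS p₀ hp₀ n r :=
        st_mono S hS p₀ hp₀ (by omega) r
      have := hpre.length_le
      have : (Stc S hS p₀ hp₀ n r).length ≥ N := by omega
      show N + 1 ≤ (Stc S hS p₀ hp₀ (n+1) r).length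
      have h2 : (Stc S hS p₀ hp₀ (n+1) r).length ≥ (Stc S hS p₀ hp₀ n r).length + 1 := hlen
      omega

private lemma prefix_of_getElem {l₁ l₂ : List ℕ} (hlen : l₁.length ≤ l₂.length)
    (h : ∀ j (hj1 : j < l₁.length) (hj2 : j < l₂.length), l₁[j] = l₂[j]) : l₁ <+: l₂ := by
  rw [List.prefix_iff_eq_take]
  refine List.ext_getElem (by rw [List.length_take]; omega) ?_
  intro j hj1 hj2
  rw [List.getElem_take]
  exact h j hj1 (by omega)

lemma main_meets (e : ℕ) (l : List ℕ) (k : ℕ) (hr : (e, l) ∈ Pc S hS p₀ hp₀ k) :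
    listJoin (l.map (Gen S hS p₀ hp₀)) ∈ S e := by
  set r : ℕ × List ℕ := (e, l) with hrdef
  choose mst hmst using stems_grow S hS p₀ hp₀ r k hr
  set slim : ℕ → ℕ := fun j => (Stc S hS p₀ hp₀ (mst (j+1)) r).getD j 0 with hslim
  have coh : ∀ m j, j < (Stc S hS p₀ hp₀ m r).length →
      (Stc S hS p₀ hp₀ m r).getD j 0 = slim j := by
    intro m j hj
    have hj' : j < (Stc S hS p₀ hp₀ (mst (j+1)) r).length := by
      have := hmst (j+1); omega
    show _ = (Stc S hS p₀ hp₀ (mst (j+1)) r).getD j 0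
    rcases le_total m (mst (j+1)) with h | h
    · have hpre := st_mono S hS p₀ hp₀ h r
      rw [List.getD_eq_getElem _ _ hj, List.getD_eq_getElem _ _ hj', hpre.getElem hj]
    · have hpre := st_mono S hS p₀ hp₀ h r
      rw [List.getD_eq_getElem _ _ hj, List.getD_eq_getElem _ _ hj', hpre.getElem hj']
  rw [(phiOf_spec S hS e).2]
  refine CSTf_limit (phiOf_spec S hS e).1 slim _ ?_
  intro n
  set Mb := (Finset.range n).sup
    (fun j => 3 * Nat.pair (l.getD (Nat.unpair j).1 0) (Nat.unpair j).2 + 1) with hMb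
  set M := max (max k (mst n)) Mb with hM
  obtain ⟨Xs, hXs⟩ := (chainF S hS p₀ hp₀ M).2.1
  refine ⟨listJoin (l.map Xs), ?_, ?_⟩
  · have hmem : listJoin (l.map Xs) ∈ CSTe S hS e (Stc S hS p₀ hp₀ M r) := by
      by_cases hnil : Stc S hS p₀ hp₀ M r = []
      · rw [hnil, CSTe, CSTf_nil (phiOf_spec S hS e).1]
        have hrM : r ∈ Pc S hS p₀ hp₀ M := pc_mono S hS p₀ hp₀ (by omega) hr
        exact ((phiOf_spec S hS e).2 _).mp (hXs _ hrM)
      · have hpair := (chainF S hS p₀ hp₀ M).2.2 r hnil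
        have hthis : listJoin (r.2.map Xs) ∈ S (stIdx S hS r.1 (Stc S hS p₀ hp₀ M r)) :=
          hXs _ hpair
        rwa [stIdx_spec S hS r.1 (Stc S hS p₀ hp₀ M r)] at hthis
    refine CSTf_prefix ?_ hmem
    have hlenn : n ≤ (Stc S hS p₀ hp₀ M r).length := by
      have h1 := hmst n
      have hpre : Stc S hS p₀ hp₀ (mst n) r <+: Stc S hS p₀ hp₀ M r :=
        st_mono S hS p₀ hp₀ (by omega) r
      have := hpre.length_le
      omega
    refine prefix_of_getElem (by rw [List.length_ofFn]; omega) ?_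
    intro j hj1 hj2
    rw [List.getElem_ofFn]
    rw [← List.getD_eq_getElem _ 0 hj2]
    rw [List.length_ofFn] at hj1
    exact (coh M j (by omega)).symm
  · intro j hj
    rw [mem_listJoin_pair, mem_listJoin_pair]
    refine and_congr Iff.rfl ?_
    have hstage : 3 * Nat.pair (l.getD (Nat.unpair j).1 0) (Nat.unpair j).2 + 1 ≤ M := by
      have : 3 * Nat.pair (l.getD (Nat.unpair j).1 0) (Nat.unpair j).2 + 1 ≤ Mb :=
        Finset.le_sup (f := fun j => 3 * Nat.pair (l.getD (Nat.unpair j).1 0) (Nat.unpair j).2 + 1)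
          (Finset.mem_range.mpr hj)
      omega
    exact bit_decided S hS p₀ hp₀ _ _ M hstage Xs hXs

end
end SOA

/-- Every condition is met by some generic sequence. -/
theorem SOA.exists_generic_meeting (S : ℕ → Set (Set ℕ)) (hS : SOA.IsS11Enum S)
    (p : SOA.Cond) (hp : p ∈ SOA.Conds S) :
    ∃ G : ℕ → Set ℕ, SOA.Generic S G ∧ SOA.Meets S G p := by
  classical
  have hp' : ∃ Xs, Meets S Xs p := hp
  refine ⟨Gen S hS p hp', ?_, ?_⟩
  · intro D hdense hdef
    have hfam : D ∈ Fam S := ⟨hdense, hdef⟩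
    obtain ⟨m, hm⟩ := DSeq_covers hfam
    set n := 3 * m + 2 with hn
    have h2 : n % 3 = 2 := by omega
    have hdiv : n / 3 = m := by omega
    have hguard : ∃ q ∈ DSeq S (n/3), Pc S hS p hp' n ⊆ q ∧ q ∈ Conds S := by
      obtain ⟨q, hqD, hq⟩ := hdense.2 (Pc S hS p hp' n) (chainF S hS p hp' n).2.1
      refine ⟨q, ?_, hq, hdense.1 hqD⟩
      rw [hdiv, hm]
      exact hqD
    obtain ⟨q, hqD, hsub, hqp⟩ := (chain_rel S hS p hp' n).2.2.2.2 h2 hguard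
    rw [hdiv, hm] at hqD
    refine ⟨q, hqD, ?_⟩
    intro q' hq'
    exact main_meets S hS p hp' q'.1 q'.2 (n+1) (hqp hq')
  · intro q' hq'
    exact main_meets S hS p hp' q'.1 q'.2 0 hq'
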